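/- arXiv:2004.08625 — 9 statements merged into one kernel-verified Lean document; each statement's English description precedes it below -/
import Mathlib

section
/- If f(z) = Σ_{k=0}^∞ a_k z^k is analytic on the open unit disk and |f(z)| ≤ 1 there, then Σ_{k=0}^∞ |a_k| r^k ≤ 1 for all 0 ≤ r ≤ 1/3. -/
open MeasureTheory Real Complex Set

lemma int_exp_eq (m : ℤ) :
    (∫ θ : ℝ in Set.Ioc 0 (2*π), Complex.exp ((m:ℂ) * θ * Complex.I)) =
      if m = 0 then (2*π : ℂ) else 0 := by
  rw [← intervalIntegral.integral_of_le (by positivity : (0:ℝ) ≤ 2*π)]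
  split_ifs with h
  · simp [h]
  · have hc : ((m:ℂ) * Complex.I) ≠ 0 := by
      simp [Complex.ext_iff, h]
    have : (fun θ : ℝ => Complex.exp ((m:ℂ) * θ * Complex.I))
        = fun θ : ℝ => Complex.exp (((m:ℂ) * Complex.I) * θ) := by
      funext θ; ring_nf
    rw [show (∫ θ : ℝ in (0:ℝ)..(2*π), Complex.exp ((m:ℂ) * θ * Complex.I))
        = ∫ θ : ℝ in (0:ℝ)..(2*π), Complex.exp (((m:ℂ) * Complex.I) * θ) by
      rw [this]]
    rw [integral_exp_mul_complex hc]
    have h1 : Complex.exp ((m:ℂ) * Complex.I * (2*π)) = 1 := by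
      rw [show (m:ℂ) * Complex.I * (2*π) = m * (2*π*Complex.I) by push_cast; ring]
      exact Complex.exp_int_mul_two_pi_mul_I m
    simp [h1]

lemma summable_coeff {a : ℕ → ℂ} {ρ ρ' : ℝ} (h0 : 0 ≤ ρ) (hlt : ρ < ρ')
    (h : Summable fun k : ℕ => a k * (ρ' : ℂ) ^ k) :
    Summable fun n : ℕ => ‖a n‖ * ρ ^ n := by
  have hρ' : 0 < ρ' := lt_of_le_of_lt h0 hlt
  obtain ⟨C, hC⟩ := h.tendsto_atTop_zero.norm.bddAbove_range
  have hCn : ∀ n : ℕ, ‖a n‖ * ρ' ^ n ≤ C := by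
    intro n
    have := hC ⟨n, rfl⟩
    simpa [norm_mul, norm_pow, Complex.norm_real, abs_of_pos hρ'] using this
  have hgeo : Summable fun n : ℕ => C * (ρ / ρ') ^ n := by
    apply Summable.mul_left
    exact summable_geometric_of_lt_one (div_nonneg h0 hρ'.le)
      ((div_lt_one hρ').mpr hlt)
  apply Summable.of_nonneg_of_le (fun n => by positivity) (fun n => ?_) hgeo
  have hpow : (0:ℝ) < ρ' ^ n := by positivity
  calc ‖a n‖ * ρ ^ n = (‖a n‖ * ρ' ^ n) * (ρ ^ n / ρ' ^ n) := by
        field_simp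
      _ ≤ C * (ρ ^ n / ρ' ^ n) :=
        mul_le_mul_of_nonneg_right (hCn n) (by positivity)
      _ = C * (ρ / ρ') ^ n := by rw [div_pow]

lemma coeff_integral (f : ℂ → ℂ) (a : ℕ → ℂ)
    (hrep : ∀ z ∈ Metric.ball (0 : ℂ) 1, HasSum (fun k : ℕ => a k * z ^ k) (f z))
    {ρ : ℝ} (h0 : 0 < ρ) (h1 : ρ < 1) (m : ℤ) :
    (∫ θ : ℝ in Set.Ioc 0 (2*π),
        f ((ρ:ℂ) * Complex.exp (θ * Complex.I)) * Complex.exp (-(m:ℂ) * θ * Complex.I))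
      = if 0 ≤ m then ((2*π:ℝ) : ℂ) * a m.toNat * (ρ:ℂ) ^ m.toNat else 0 := by
  set F : ℕ → ℝ → ℂ := fun n θ => a n * (ρ:ℂ)^n * Complex.exp ((((n:ℤ) - m : ℤ):ℂ) * θ * Complex.I) with hF
  have hexp1 : ∀ c : ℝ, ‖Complex.exp ((c:ℂ) * Complex.I)‖ = 1 := by
    intro c
    rw [Complex.norm_exp_ofReal_mul_I]
  have hmem : ∀ θ : ℝ, ((ρ:ℂ) * Complex.exp (θ * Complex.I)) ∈ Metric.ball (0:ℂ) 1 := by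
    intro θ
    simp only [Metric.mem_ball, dist_zero_right, norm_mul, Complex.norm_real,
      hexp1 θ, mul_one, Real.norm_eq_abs]
    rw [abs_of_pos h0]; exact h1
  have hpt : ∀ θ : ℝ, HasSum (fun n => F n θ)
      (f ((ρ:ℂ) * Complex.exp (θ * Complex.I)) * Complex.exp (-(m:ℂ) * θ * Complex.I)) := by
    intro θ
    have key : ∀ n : ℕ, F n θ
        = a n * ((ρ:ℂ) * Complex.exp (θ * Complex.I))^n * Complex.exp (-(m:ℂ) * θ * Complex.I) := by
      intro n
      have e : Complex.exp ((((n:ℤ) - m : ℤ):ℂ) * θ * Complex.I)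
          = Complex.exp ((n:ℂ) * (θ * Complex.I)) * Complex.exp (-(m:ℂ) * θ * Complex.I) := by
        rw [← Complex.exp_add]; congr 1; push_cast; ring
      rw [hF]; simp only []
      rw [e, mul_pow, ← Complex.exp_nat_mul]; ring
    rw [show (fun n => F n θ) = fun n => a n * ((ρ:ℂ) * Complex.exp (θ * Complex.I))^n
        * Complex.exp (-(m:ℂ) * θ * Complex.I) from funext key]
    exact (hrep _ (hmem θ)).mul_right _
  have hcont : ∀ n : ℕ, Continuous (F n) := by
    intro n
    apply Continuous.mul continuous_const
    exact Complex.continuous_exp.comp (by continuity)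
  have hint : ∀ n : ℕ, Integrable (F n) (volume.restrict (Set.Ioc 0 (2*π))) := by
    intro n
    exact (hcont n).integrableOn_Ioc
  have hnorm : ∀ n : ℕ, ∀ θ : ℝ, ‖F n θ‖ = ‖a n‖ * ρ ^ n := by
    intro n θ
    rw [hF]; simp only []
    rw [norm_mul, norm_mul, norm_pow]
    rw [show ((((n:ℤ) - m : ℤ):ℂ) * θ * Complex.I) = ((((n:ℤ) - m : ℤ):ℝ) * θ : ℝ) * Complex.I by
      push_cast; ring]
    rw [hexp1, Complex.norm_real, Real.norm_eq_abs, abs_of_pos h0, mul_one]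
  have hnormint : ∀ n : ℕ, (∫ θ : ℝ in Set.Ioc 0 (2*π), ‖F n θ‖) = ‖a n‖ * ρ ^ n * (2*π) := by
    intro n
    simp_rw [hnorm n]
    rw [setIntegral_const, Real.volume_real_Ioc_of_le (by positivity : (0:ℝ) ≤ 2*π)]
    simp [smul_eq_mul]; ring
  have hsummable : Summable fun n : ℕ => ∫ θ : ℝ in Set.Ioc 0 (2*π), ‖F n θ‖ := by
    simp_rw [hnormint]
    set ρ' : ℝ := (1+ρ)/2 with hρ'
    have h2 : ρ < ρ' := by rw [hρ']; linarith
    have h3 : ρ' < 1 := by rw [hρ']; linarith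
    have h5 : 0 < ρ' := by rw [hρ']; linarith
    have h4 : ((ρ':ℝ):ℂ) ∈ Metric.ball (0:ℂ) 1 := by
      simp only [Metric.mem_ball, dist_zero_right, Complex.norm_real, Real.norm_eq_abs]
      rw [abs_of_pos h5]; exact h3
    exact (summable_coeff h0.le h2 (hrep _ h4).summable).mul_right _
  have hmain := hasSum_integral_of_summable_integral_norm hint hsummable
  have hts : (∫ θ : ℝ in Set.Ioc 0 (2*π), ∑' n, F n θ)
      = ∫ θ : ℝ in Set.Ioc 0 (2*π),
          f ((ρ:ℂ) * Complex.exp (θ * Complex.I)) * Complex.exp (-(m:ℂ) * θ * Complex.I) := by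
    apply integral_congr_ae
    filter_upwards with θ
    exact (hpt θ).tsum_eq
  rw [hts] at hmain
  have hFn : ∀ n : ℕ, (∫ θ : ℝ in Set.Ioc 0 (2*π), F n θ)
      = a n * (ρ:ℂ)^n * (if ((n:ℤ) = m) then ((2*π:ℝ):ℂ) else 0) := by
    intro n
    rw [hF]; simp only []
    rw [integral_const_mul, int_exp_eq ((n:ℤ) - m)]
    congr 1
    simp [sub_eq_zero]
  rw [← hmain.tsum_eq]
  simp_rw [hFn]
  by_cases hm : 0 ≤ m
  · rw [if_pos hm]
    rw [tsum_eq_single m.toNat]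
    · rw [if_pos (by omega)]
      push_cast [Int.toNat_of_nonneg hm]
      ring
    · intro n hn
      rw [if_neg (by omega), mul_zero]
  · rw [if_neg hm]
    have hz : (fun n : ℕ => a n * (ρ:ℂ)^n * (if ((n:ℤ) = m) then ((2*π:ℝ):ℂ) else 0))
        = fun _ => (0:ℂ) := by
      funext n; rw [if_neg (by omega), mul_zero]
    rw [hz, tsum_zero]

lemma coeff_bound (f : ℂ → ℂ) (a : ℕ → ℂ)
    (hf : AnalyticOn ℂ f (Metric.ball (0 : ℂ) 1))
    (hrep : ∀ z ∈ Metric.ball (0 : ℂ) 1, HasSum (fun k : ℕ => a k * z ^ k) (f z))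
    (hbd : ∀ z ∈ Metric.ball (0 : ℂ) 1, ‖f z‖ ≤ 1)
    {k : ℕ} (hk : 1 ≤ k) : ‖a k‖ ≤ 2 * (1 - ‖a 0‖) := by
  -- choose unimodular μ0 with μ0 * a 0 = ‖a 0‖
  obtain ⟨μ0, hμ1, hμ2⟩ : ∃ μ0 : ℂ, ‖μ0‖ = 1 ∧ μ0 * a 0 = (‖a 0‖ : ℂ) := by
    by_cases h : a 0 = 0
    · exact ⟨1, by simp, by simp [h]⟩
    · refine ⟨(starRingEnd ℂ) (a 0) / ‖a 0‖, ?_, ?_⟩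
      · rw [norm_div, RCLike.norm_conj]
        simp only [Complex.norm_real, Real.norm_eq_abs, abs_norm]
        exact div_self (norm_ne_zero_iff.mpr h)
      · have hne : ((‖a 0‖ : ℝ) : ℂ) ≠ 0 := by
          simpa using h
        rw [div_mul_eq_mul_div, mul_comm, Complex.mul_conj, Complex.normSq_eq_norm_sq]
        push_cast
        rw [pow_two, mul_div_assoc, div_self hne, mul_one]
  -- main estimate for each radius
  have key : ∀ ρ : ℝ, 0 < ρ → ρ < 1 → ‖a k‖ * ρ ^ k ≤ 2 * (1 - ‖a 0‖) := by
    intro ρ hρ0 hρ1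
    set g : ℝ → ℂ := fun θ => f ((ρ:ℂ) * Complex.exp (θ * Complex.I)) with hgdef
    have hmem : ∀ θ : ℝ, ((ρ:ℂ) * Complex.exp (θ * Complex.I)) ∈ Metric.ball (0:ℂ) 1 := by
      intro θ
      simp only [Metric.mem_ball, dist_zero_right, norm_mul, Complex.norm_real, Real.norm_eq_abs]
      rw [Complex.norm_exp_ofReal_mul_I, abs_of_pos hρ0, mul_one]
      exact hρ1
    have hgcont : Continuous g := by
      rw [hgdef]
      rw [← continuousOn_univ]
      apply hf.continuousOn.comp ((by continuity : Continuous fun θ : ℝ => (ρ:ℂ) * Complex.exp (θ * Complex.I)).continuousOn)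
      exact fun θ _ => hmem θ
    -- the three coefficient integrals
    have I0 : (∫ θ : ℝ in Set.Ioc 0 (2*π), g θ) = ((2*π:ℝ):ℂ) * a 0 := by
      have := coeff_integral f a hrep hρ0 hρ1 0
      simpa using this
    have Ik : (∫ θ : ℝ in Set.Ioc 0 (2*π), g θ * Complex.exp (-(k:ℂ) * θ * Complex.I))
        = ((2*π:ℝ):ℂ) * a k * (ρ:ℂ) ^ k := by
      have := coeff_integral f a hrep hρ0 hρ1 (k:ℤ)
      simpa using this
    have Imk : (∫ θ : ℝ in Set.Ioc 0 (2*π), g θ * Complex.exp ((k:ℂ) * θ * Complex.I)) = 0 := by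
      have := coeff_integral f a hrep hρ0 hρ1 (-(k:ℤ))
      rw [if_neg (by omega)] at this
      rw [← this]
      apply integral_congr_ae
      filter_upwards with θ
      congr 2
      push_cast
      ring
    -- integrability facts
    have hgint : Integrable g (volume.restrict (Set.Ioc 0 (2*π))) := hgcont.integrableOn_Ioc
    -- the function u
    set u : ℝ → ℝ := fun θ => 1 - (μ0 * g θ).re with hudef
    have hucont : Continuous u := by
      rw [hudef]
      exact continuous_const.sub (Complex.continuous_re.comp (continuous_const.mul hgcont))
    have hunn : ∀ θ : ℝ, 0 ≤ u θ := by
      intro θ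
      rw [hudef]
      simp only [sub_nonneg]
      calc (μ0 * g θ).re ≤ ‖μ0 * g θ‖ := Complex.re_le_norm _
        _ = ‖g θ‖ := by rw [norm_mul, hμ1, one_mul]
        _ ≤ 1 := hbd _ (hmem θ)
    -- the complex integral of u * exp(-ikθ)
    have hsplit : ∀ θ : ℝ, ((u θ : ℝ) : ℂ) * Complex.exp (-(k:ℂ) * θ * Complex.I)
        = Complex.exp (-(k:ℂ) * θ * Complex.I)
          - (1/2 * μ0) * (g θ * Complex.exp (-(k:ℂ) * θ * Complex.I))
          - (starRingEnd ℂ) ((1/2 * μ0) * (g θ * Complex.exp ((k:ℂ) * θ * Complex.I))) := by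
      intro θ
      have hre : ((((μ0 * g θ).re : ℝ)) : ℂ) = (μ0 * g θ + (starRingEnd ℂ) (μ0 * g θ)) / 2 := by
        rw [Complex.add_conj]
        push_cast
        ring
      have hconjexp : (starRingEnd ℂ) (Complex.exp ((k:ℂ) * θ * Complex.I))
          = Complex.exp (-(k:ℂ) * θ * Complex.I) := by
        rw [← Complex.exp_conj]
        congr 1
        simp [Complex.ext_iff]
      rw [hudef]
      push_cast
      rw [hre]
      simp only [map_mul, map_div₀, map_one, map_ofNat, hconjexp]
      ring
    -- integrability of pieces
    have hE : ∀ c : ℂ, Continuous fun θ : ℝ => Complex.exp (c * θ * Complex.I) := by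
      intro c
      exact Complex.continuous_exp.comp (by continuity)
    have hint1 : Integrable (fun θ : ℝ => Complex.exp (-(k:ℂ) * θ * Complex.I))
        (volume.restrict (Set.Ioc 0 (2*π))) := (hE _).integrableOn_Ioc
    have hint2 : Integrable (fun θ : ℝ => (1/2 * μ0) * (g θ * Complex.exp (-(k:ℂ) * θ * Complex.I)))
        (volume.restrict (Set.Ioc 0 (2*π))) :=
      (continuous_const.mul (hgcont.mul (hE _))).integrableOn_Ioc
    have hint3 : Integrable (fun θ : ℝ => (starRingEnd ℂ) ((1/2 * μ0) * (g θ * Complex.exp ((k:ℂ) * θ * Complex.I))))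
        (volume.restrict (Set.Ioc 0 (2*π))) := by
      apply Continuous.integrableOn_Ioc
      exact Complex.continuous_conj.comp (continuous_const.mul (hgcont.mul (hE _)))
    -- compute the integral J
    have hJ : (∫ θ : ℝ in Set.Ioc 0 (2*π), ((u θ : ℝ) : ℂ) * Complex.exp (-(k:ℂ) * θ * Complex.I))
        = -(1/2 * μ0) * (((2*π:ℝ):ℂ) * a k * (ρ:ℂ) ^ k) := by
      have e1 : (∫ θ : ℝ in Set.Ioc 0 (2*π), Complex.exp (-(k:ℂ) * θ * Complex.I)) = 0 := by
        have := int_exp_eq (-(k:ℤ))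
        rw [if_neg (by omega)] at this
        rw [← this]
        apply integral_congr_ae
        filter_upwards with θ
        congr 2
        push_cast
        ring
      have e2 : (∫ θ : ℝ in Set.Ioc 0 (2*π), (1/2 * μ0) * (g θ * Complex.exp (-(k:ℂ) * θ * Complex.I)))
          = (1/2 * μ0) * (((2*π:ℝ):ℂ) * a k * (ρ:ℂ) ^ k) := by
        rw [integral_const_mul, Ik]
      have e3 : (∫ θ : ℝ in Set.Ioc 0 (2*π), (starRingEnd ℂ) ((1/2 * μ0) * (g θ * Complex.exp ((k:ℂ) * θ * Complex.I))))
          = 0 := by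
        rw [integral_conj, integral_const_mul, Imk]
        simp
      have hint12 : Integrable (fun θ : ℝ => Complex.exp (-(k:ℂ) * θ * Complex.I)
          - (1/2 * μ0) * (g θ * Complex.exp (-(k:ℂ) * θ * Complex.I)))
          (volume.restrict (Set.Ioc 0 (2*π))) := hint1.sub hint2
      simp_rw [hsplit]
      rw [integral_sub hint12 hint3, integral_sub hint1 hint2, e1, e2, e3]
      ring
    -- norm computations
    have hJnorm : ‖(∫ θ : ℝ in Set.Ioc 0 (2*π), ((u θ : ℝ) : ℂ) * Complex.exp (-(k:ℂ) * θ * Complex.I))‖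
        = π * (‖a k‖ * ρ ^ k) := by
      rw [hJ]
      simp only [norm_mul, norm_neg, norm_pow, Complex.norm_real, Real.norm_eq_abs]
      rw [hμ1]
      have h2 : ‖(1/2 : ℂ)‖ = 1/2 := by norm_num
      rw [h2, abs_of_pos Real.pi_pos, abs_of_pos hρ0, (by norm_num : |(2:ℝ)| = 2)]
      ring
    -- bound the integral
    have hre_int : Integrable (fun θ : ℝ => (μ0 * g θ).re) (volume.restrict (Set.Ioc 0 (2*π))) :=
      (Complex.continuous_re.comp (continuous_const.mul hgcont)).integrableOn_Ioc
    have hIu : (∫ θ : ℝ in Set.Ioc 0 (2*π), u θ) = 2*π * (1 - ‖a 0‖) := by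
      rw [hudef]
      simp only []
      rw [integral_sub (integrable_const 1) hre_int]
      have hμg_int : Integrable (fun θ : ℝ => μ0 * g θ) (volume.restrict (Set.Ioc 0 (2*π))) :=
        (continuous_const.mul hgcont).integrableOn_Ioc
      have hre2 : (∫ θ : ℝ in Set.Ioc 0 (2*π), (μ0 * g θ).re)
          = (∫ θ : ℝ in Set.Ioc 0 (2*π), μ0 * g θ).re := by
        simpa using integral_re hμg_int
      rw [hre2, integral_const_mul, I0]
      rw [setIntegral_const, Real.volume_real_Ioc_of_le (by positivity : (0:ℝ) ≤ 2*π)]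
      have hval : (μ0 * (((2*π:ℝ):ℂ) * a 0)).re = 2*π*‖a 0‖ := by
        rw [show μ0 * (((2*π:ℝ):ℂ) * a 0) = ((2*π:ℝ):ℂ) * (μ0 * a 0) from by ring, hμ2]
        rw [show (((2*π:ℝ)):ℂ) * ((‖a 0‖:ℝ):ℂ) = (((2*π*‖a 0‖ : ℝ)):ℂ) from by push_cast; ring]
        rw [Complex.ofReal_re]
      rw [hval]
      simp
      ring
    have hbound : π * (‖a k‖ * ρ ^ k) ≤ 2*π * (1 - ‖a 0‖) := by
      rw [← hJnorm, ← hIu]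
      calc ‖∫ θ : ℝ in Set.Ioc 0 (2*π), ((u θ : ℝ) : ℂ) * Complex.exp (-(k:ℂ) * θ * Complex.I)‖
          ≤ ∫ θ : ℝ in Set.Ioc 0 (2*π), ‖((u θ : ℝ) : ℂ) * Complex.exp (-(k:ℂ) * θ * Complex.I)‖ :=
            norm_integral_le_integral_norm _
        _ = ∫ θ : ℝ in Set.Ioc 0 (2*π), u θ := by
            apply integral_congr_ae
            filter_upwards with θ
            rw [norm_mul]
            rw [show (-(k:ℂ) * θ * Complex.I) = (((-(k:ℝ) * θ : ℝ)):ℂ) * Complex.I by push_cast; ring]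
            rw [Complex.norm_exp_ofReal_mul_I, mul_one,
              Complex.norm_real, Real.norm_eq_abs, _root_.abs_of_nonneg (hunn θ)]
    nlinarith [Real.pi_pos]
  -- take the limit ρ → 1⁻
  have htend : Filter.Tendsto (fun ρ : ℝ => ‖a k‖ * ρ ^ k) (nhdsWithin 1 (Set.Iio 1))
      (nhds (‖a k‖ * 1 ^ k)) :=
    ((continuous_const.mul (continuous_pow k)).tendsto 1).mono_left nhdsWithin_le_nhds
  have hev : ∀ᶠ ρ : ℝ in nhdsWithin 1 (Set.Iio 1), ‖a k‖ * ρ ^ k ≤ 2 * (1 - ‖a 0‖) := by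
    filter_upwards [Ioo_mem_nhdsLT_of_mem (show (1:ℝ) ∈ Set.Ioc 0 1 by norm_num)] with ρ hρ
    exact key ρ hρ.1 hρ.2
  have := le_of_tendsto htend hev
  simpa using this

set_option maxHeartbeats 1000000 in
/-- Classical Bohr inequality: if `f(z) = Σ a_k z^k` is analytic on the unit disk
with `|f| ≤ 1`, then `Σ |a_k| r^k ≤ 1` for `0 ≤ r ≤ 1/3`. -/
theorem bohr_inequality (f : ℂ → ℂ) (a : ℕ → ℂ)
    (hf : AnalyticOn ℂ f (Metric.ball (0 : ℂ) 1))
    (hrep : ∀ z ∈ Metric.ball (0 : ℂ) 1, HasSum (fun k : ℕ => a k * z ^ k) (f z))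
    (hbd : ∀ z ∈ Metric.ball (0 : ℂ) 1, ‖f z‖ ≤ 1)
    (r : ℝ) (hr0 : 0 ≤ r) (hr : r ≤ 1 / 3) :
    ∑' k : ℕ, ‖a k‖ * r ^ k ≤ 1 := by
  -- ‖a 0‖ ≤ 1
  have h0mem : (0:ℂ) ∈ Metric.ball (0:ℂ) 1 := by simp
  have ha0f : f 0 = a 0 := by
    have hs := hrep 0 h0mem
    have hs2 : HasSum (fun k : ℕ => a k * (0:ℂ) ^ k) (a 0 * (0:ℂ) ^ 0) :=
      hasSum_single 0 (fun b hb => by simp [zero_pow hb])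
    simpa using hs.unique hs2
  have ht1 : ‖a 0‖ ≤ 1 := by
    rw [← ha0f]; exact hbd 0 h0mem
  have ht0 : 0 ≤ ‖a 0‖ := norm_nonneg _
  have hak : ∀ k : ℕ, 1 ≤ k → ‖a k‖ ≤ 2 * (1 - ‖a 0‖) :=
    fun k hk => coeff_bound f a hf hrep hbd hk
  by_cases hrz : r = 0
  · rw [hrz]
    rw [tsum_eq_single 0 (fun b hb => by simp [zero_pow hb])]
    simpa using ht1
  have hrpos : 0 < r := lt_of_le_of_ne hr0 (Ne.symm hrz)
  have hr1 : r < 1 := by linarith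
  have hak2 : ∀ k : ℕ, ‖a k‖ ≤ 2 := by
    intro k
    rcases Nat.eq_zero_or_pos k with h | h
    · rw [h]; linarith
    · have := hak k h; linarith
  have hsum : Summable (fun k : ℕ => ‖a k‖ * r ^ k) := by
    apply Summable.of_nonneg_of_le (fun k => by positivity) (fun k => ?_)
      ((summable_geometric_of_lt_one hr0 hr1).mul_left 2)
    exact mul_le_mul_of_nonneg_right (hak2 k) (by positivity)
  have hsum1 : Summable (fun k : ℕ => ‖a (k+1)‖ * r ^ (k+1)) :=
    (summable_nat_add_iff 1).mpr hsum
  have hsum2 : Summable (fun k : ℕ => (2 * (1 - ‖a 0‖)) * r ^ (k+1)) := by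
    apply Summable.mul_left
    exact (summable_nat_add_iff 1).mpr (summable_geometric_of_lt_one hr0 hr1)
  rw [Summable.tsum_eq_zero_add hsum]
  have htail : (∑' k : ℕ, ‖a (k+1)‖ * r ^ (k+1))
      ≤ ∑' k : ℕ, (2 * (1 - ‖a 0‖)) * r ^ (k+1) := by
    apply Summable.tsum_le_tsum _ hsum1 hsum2
    intro k
    exact mul_le_mul_of_nonneg_right (hak (k+1) (by omega)) (by positivity)
  have hgeo : (∑' k : ℕ, (2 * (1 - ‖a 0‖)) * r ^ (k+1))
      = (2 * (1 - ‖a 0‖)) * r * (1 - r)⁻¹ := by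
    have : ∀ k : ℕ, (2 * (1 - ‖a 0‖)) * r ^ (k+1) = ((2 * (1 - ‖a 0‖)) * r) * r ^ k := by
      intro k; rw [pow_succ]; ring
    simp_rw [this]
    rw [tsum_mul_left, tsum_geometric_of_lt_one hr0 hr1]
  -- final arithmetic
  have h1r : 0 < 1 - r := by linarith
  set s : ℝ := (1 - r)⁻¹ with hs
  have hspos : 0 < s := by positivity
  have hs1 : (1 - r) * s = 1 := mul_inv_cancel₀ (ne_of_gt h1r)
  have h2rs : 2 * r * s ≤ 1 := by nlinarith [mul_nonneg hspos.le (by linarith : (0:ℝ) ≤ 1 - 3*r)]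
  have hfin : ‖a 0‖ * r ^ 0 + (2 * (1 - ‖a 0‖)) * r * s ≤ 1 := by
    rw [pow_zero, mul_one]
    nlinarith [mul_le_mul_of_nonneg_left h2rs (by linarith : (0:ℝ) ≤ 1 - ‖a 0‖)]
  calc ‖a 0‖ * r ^ 0 + ∑' k : ℕ, ‖a (k+1)‖ * r ^ (k+1)
      ≤ ‖a 0‖ * r ^ 0 + (2 * (1 - ‖a 0‖)) * r * s := by
        rw [← hgeo] at *; linarith [htail]
    _ ≤ 1 := hfin
end

section
/- The constant 1/3 in Bohr's inequality is sharp: for every r > 1/3 there exists an analytic f : D → D with power series Σ a_k z^k such that Σ |a_k| r^k > 1. -/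
/-- Sharpness of the Bohr radius `1/3`. -/
theorem bohr_radius_sharp (r : ℝ) (hr : 1 / 3 < r) :
    ∃ (f : ℂ → ℂ) (a : ℕ → ℂ),
      AnalyticOn ℂ f (Metric.ball (0 : ℂ) 1) ∧
      (∀ z ∈ Metric.ball (0 : ℂ) 1, HasSum (fun k : ℕ => a k * z ^ k) (f z)) ∧
      (∀ z ∈ Metric.ball (0 : ℂ) 1, ‖f z‖ < 1) ∧
      1 < ∑' k : ℕ, ‖a k‖ * r ^ k := by
  have hr0 : 0 < r := by linarith
  set a : ℝ := 3 / (2 + 3 * r) with ha_def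
  have hden : (0:ℝ) < 2 + 3 * r := by linarith
  have ha0 : 0 < a := by positivity
  have ha1 : a < 1 := by
    rw [ha_def, div_lt_one hden]; linarith
  have har : a * r < 1 := by
    rw [ha_def, div_mul_eq_mul_div, div_lt_one hden]; linarith
  have har0 : 0 ≤ a * r := by positivity
  -- nonvanishing of the denominator on the ball
  have hne : ∀ z ∈ Metric.ball (0:ℂ) 1, (1 : ℂ) - (a:ℂ) * z ≠ 0 := by
    intro z hz
    simp only [Metric.mem_ball, dist_zero_right] at hz
    intro h
    have h1 : (a:ℂ) * z = 1 := by linear_combination -h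
    have : ‖(a:ℂ) * z‖ = 1 := by rw [h1]; simp
    rw [norm_mul, Complex.norm_real, Real.norm_eq_abs, abs_of_pos ha0] at this
    nlinarith [norm_nonneg z]
  refine ⟨fun z => ((a:ℂ) - z) / (1 - (a:ℂ) * z),
    fun k => match k with
      | 0 => (a:ℂ)
      | k + 1 => ((a:ℂ)^2 - 1) * (a:ℂ)^k, ?_, ?_, ?_, ?_⟩
  · exact AnalyticOn.div (analyticOn_const.sub analyticOnNhd_id.analyticOn)
      (analyticOn_const.sub (analyticOn_const.mul analyticOnNhd_id.analyticOn)) hne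
  · intro z hz
    have hzn : ‖z‖ < 1 := by simpa [Metric.mem_ball, dist_zero_right] using hz
    have haz : ‖(a:ℂ) * z‖ < 1 := by
      rw [norm_mul, Complex.norm_real, Real.norm_eq_abs, abs_of_pos ha0]
      nlinarith [norm_nonneg z]
    have hg := (hasSum_geometric_of_norm_lt_one haz).mul_left (((a:ℂ)^2 - 1) * z)
    have hg' : HasSum (fun n : ℕ => ((a:ℂ)^2 - 1) * (a:ℂ)^n * z^(n+1))
        (((a:ℂ)^2 - 1) * z * (1 - (a:ℂ) * z)⁻¹) := by
      convert hg using 2 with n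
      · rfl
      ring
    have hfull := (hasSum_nat_add_iff (f := fun k : ℕ =>
      (match k with
        | 0 => (a:ℂ)
        | k + 1 => ((a:ℂ)^2 - 1) * (a:ℂ)^k) * z ^ k) 1).mp (by simpa using hg')
    convert hfull using 1
    · rfl
    have hd := hne z hz
    simp only [Finset.sum_range_one, pow_zero, mul_one]
    field_simp
    ring
  · intro z hz
    have hzn : ‖z‖ < 1 := by simpa [Metric.mem_ball, dist_zero_right] using hz
    have hd := hne z hz
    rw [norm_div, div_lt_one (norm_pos_iff.mpr hd)]
    have h1 : ‖(a:ℂ) - z‖^2 = (a - z.re)^2 + z.im^2 := by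
      rw [Complex.sq_norm, Complex.normSq_apply]; simp; ring
    have h2 : ‖(1:ℂ) - (a:ℂ) * z‖^2 = (1 - a * z.re)^2 + (a * z.im)^2 := by
      rw [Complex.sq_norm, Complex.normSq_apply]; simp; ring
    have h3 : z.re^2 + z.im^2 < 1 := by
      have hn2 : ‖z‖^2 < 1 := by nlinarith [norm_nonneg z]
      rw [Complex.sq_norm, Complex.normSq_apply] at hn2
      nlinarith [hn2]
    have hlt : ‖(a:ℂ) - z‖^2 < ‖(1:ℂ) - (a:ℂ)*z‖^2 := by
      rw [h1, h2]
      nlinarith [mul_pos (by nlinarith : (0:ℝ) < 1 - a^2)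
        (by nlinarith : (0:ℝ) < 1 - z.re^2 - z.im^2)]
    exact lt_of_pow_lt_pow_left₀ 2 (norm_nonneg _) hlt
  · have hna : ∀ k : ℕ, ‖(match k with
        | 0 => (a:ℂ)
        | k + 1 => ((a:ℂ)^2 - 1) * (a:ℂ)^k)‖ * r ^ k
        = (match k with
        | 0 => a
        | k + 1 => (1 - a^2) * a^k * r^(k+1)) := by
      intro k
      match k with
      | 0 => simp [abs_of_pos ha0]
      | k + 1 =>
        show ‖((a:ℂ)^2 - 1) * (a:ℂ)^k‖ * r^(k+1) = (1 - a^2) * a^k * r^(k+1)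
        have hc : ((a:ℂ)^2 - 1) = ((a^2 - 1 : ℝ) : ℂ) := by push_cast; ring
        rw [hc, ← Complex.ofReal_pow, ← Complex.ofReal_mul, Complex.norm_real,
          Real.norm_eq_abs, abs_mul, abs_of_nonneg (pow_nonneg ha0.le k),
          abs_of_nonpos (by nlinarith : a^2 - 1 ≤ 0)]
        ring
    have hg : HasSum (fun n : ℕ => (1 - a^2) * (a*r)^n * r) ((1 - a^2) * (1 - a*r)⁻¹ * r) :=
      ((hasSum_geometric_of_lt_one har0 har).mul_left (1 - a^2)).mul_right r
    have hg' : HasSum (fun n : ℕ => (1 - a^2) * a^n * r^(n+1))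
        ((1 - a^2) * (1 - a*r)⁻¹ * r) := by
      convert hg using 2 with n
      rw [mul_pow]; ring
    have hS := (hasSum_nat_add_iff (f := fun k : ℕ =>
      (match k with
        | 0 => a
        | k + 1 => (1 - a^2) * a^k * r^(k+1))) 1).mp (by simpa using hg')
    have htsum : ∑' k : ℕ, ‖(match k with
        | 0 => (a:ℂ)
        | k + 1 => ((a:ℂ)^2 - 1) * (a:ℂ)^k)‖ * r ^ k
        = (1 - a^2) * (1 - a*r)⁻¹ * r + a := by
      rw [tsum_congr hna]
      simpa using hS.tsum_eq
    rw [htsum]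
    have h1 : (0:ℝ) < 1 - a * r := by linarith
    rw [← sub_pos]
    have key : (1 - a^2) * (1 - a*r)⁻¹ * r + a - 1
        = ((1 - a^2) * r - (1 - a) * (1 - a*r)) * (1 - a*r)⁻¹ := by
      field_simp
      ring
    rw [key]
    apply mul_pos _ (inv_pos.mpr h1)
    have ha3 : a * (2 + 3 * r) = 3 := by
      rw [ha_def]; field_simp
    have h2a : 1 < r * (1 + 2 * a) := by
      nlinarith [ha3, hden, hr0, hr, mul_pos hden (show (0:ℝ) < 3 * r - 1 by linarith)]
    nlinarith [mul_pos (by linarith : (0:ℝ) < 1 - a) (by linarith : (0:ℝ) < r * (1 + 2*a) - 1)]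
end

section
/- Let g(z) = Σ_{k=0}^∞ b_k z^k be analytic on the unit disk with |g(z)| ≤ 1, |b_0| < 1, and let 0 < r ≤ 1, p ≥ 1 an integer. Then Σ_{k=1}^∞ |b_k|^2 r^{pk} ≤ r^p (1 - |b_0|^2)^2 / (1 - |b_0|^2 r^p). -/
open MeasureTheory Metric Filter Set AddCircle
open scoped ENNReal NNReal Real Topology

noncomputable section
namespace CoeffSqAux

instance : Fact ((0:ℝ) < 1) := ⟨one_pos⟩

lemma norm_fourier (n : ℤ) (x : AddCircle (1:ℝ)) : ‖(fourier n x : ℂ)‖ = 1 := by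
  rw [fourier_apply, Circle.norm_coe]

lemma fourier_nat_pow (k : ℕ) (x : AddCircle (1:ℝ)) :
    fourier (k : ℤ) x = (fourier 1 x) ^ k := by
  induction k with
  | zero => simp
  | succ n ih =>
      have : ((n+1 : ℕ) : ℤ) = (n : ℤ) + 1 := by push_cast; ring
      rw [this, fourier_add, ih, pow_succ]

lemma fourierCoeff_fourier (n m : ℤ) :
    fourierCoeff (T := 1) (⇑(fourier n)) m = if m = n then 1 else 0 := by
  classical
  rw [← fourierCoeff_toLp, ← fourierBasis_repr]
  have h : ContinuousMap.toLp (E := ℂ) 2 haarAddCircle ℂ (fourier n) = fourierBasis (T := 1) n := by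
    rw [coe_fourierBasis]
  rw [h, HilbertBasis.repr_self, lp.single_apply]
  split_ifs with hmn
  · subst hmn; simp
  · simp [hmn]

lemma parseval_nat (c : ℕ → ℂ) (hc : Summable fun k => ‖c k‖) :
    Summable (fun k => ‖c k‖ ^ 2) ∧
    ∑' k : ℕ, ‖c k‖ ^ 2
      = ∫ x : AddCircle (1:ℝ), ‖∑' k : ℕ, c k * (fourier 1 x : ℂ) ^ k‖ ^ 2 ∂haarAddCircle := by
  classical
  have hsq : Summable (fun k => ‖c k‖ ^ 2) := by
    refine Summable.of_nonneg_of_le (fun k => sq_nonneg _) (fun k => ?_) (hc.mul_left (∑' k, ‖c k‖))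
    have h1 : ‖c k‖ ≤ ∑' j, ‖c j‖ := Summable.le_tsum hc k (fun j _ => norm_nonneg _)
    calc ‖c k‖ ^ 2 = ‖c k‖ * ‖c k‖ := sq (‖c k‖) ▸ (sq (‖c k‖)).symm ▸ (by ring)
      _ ≤ (∑' j, ‖c j‖) * ‖c k‖ := mul_le_mul_of_nonneg_right h1 (norm_nonneg _)
  set cZ : ℤ → ℂ := fun n => Int.rec c (fun _ => 0) n with hcZdef
  have hcZnorm : Summable (fun n : ℤ => ‖cZ n‖) := by
    have h : (fun n : ℤ => ‖cZ n‖) = fun n : ℤ => Int.rec (fun k => ‖c k‖) (fun _ => (0:ℝ)) n := by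
      funext n; cases n with
      | ofNat k => rfl
      | negSucc k => simp [hcZdef]
    rw [h]
    exact (hc.hasSum.int_rec hasSum_zero).summable
  have hCsum : Summable (fun n : ℤ => cZ n • (fourier n : C(AddCircle (1:ℝ), ℂ))) := by
    apply Summable.of_norm
    simpa [norm_smul, fourier_norm] using hcZnorm
  set F : C(AddCircle (1:ℝ), ℂ) := ∑' n : ℤ, cZ n • fourier n with hFdef
  have hpt : ∀ x : AddCircle (1:ℝ), HasSum (fun n : ℤ => cZ n * fourier n x) (F x) := by
    intro x
    have h := (ContinuousMap.evalCLM ℂ x).hasSum hCsum.hasSum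
    simpa using h
  have hcoeff : ∀ m : ℤ, fourierCoeff (⇑F) m = cZ m := by
    intro m
    have hrw : ∀ x : AddCircle (1:ℝ),
        (fourier (-m) x : ℂ) * F x = ∑' n : ℤ, fourier (-m) x * (cZ n * fourier n x) :=
      fun x => ((hpt x).mul_left _).tsum_eq.symm
    have hms : ∀ n : ℤ, AEStronglyMeasurable
        (fun x : AddCircle (1:ℝ) => (fourier (-m) x : ℂ) * (cZ n * fourier n x)) haarAddCircle := by
      intro n
      exact ((map_continuous (fourier (-m))).mul
        (continuous_const.mul (map_continuous (fourier n)))).aestronglyMeasurable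
    have hnn : ∀ n : ℤ, ∀ x : AddCircle (1:ℝ),
        (‖(fourier (-m) x : ℂ) * (cZ n * fourier n x)‖₊ : ℝ≥0∞) = (‖cZ n‖₊ : ℝ≥0∞) := by
      intro n x
      have h : ‖(fourier (-m) x : ℂ) * (cZ n * fourier n x)‖ = ‖cZ n‖ := by
        rw [norm_mul, norm_mul, norm_fourier, norm_fourier, one_mul, mul_one]
      have h2 : ‖(fourier (-m) x : ℂ) * (cZ n * fourier n x)‖₊ = ‖cZ n‖₊ :=
        NNReal.coe_injective (by simpa [coe_nnnorm] using h)
      rw [h2]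
    calc fourierCoeff (⇑F) m
        = ∫ x : AddCircle (1:ℝ), ∑' n : ℤ, (fourier (-m) x : ℂ) * (cZ n * fourier n x)
            ∂haarAddCircle := by
          rw [fourierCoeff]
          refine integral_congr_ae (Filter.Eventually.of_forall fun x => ?_)
          show (fourier (-m)) x • F x = _
          rw [smul_eq_mul, hrw x]
      _ = ∑' n : ℤ, ∫ x : AddCircle (1:ℝ), (fourier (-m) x : ℂ) * (cZ n * fourier n x)
            ∂haarAddCircle := by
          refine integral_tsum hms ?_
          simp_rw [enorm_eq_nnnorm, hnn, lintegral_const, measure_univ, mul_one]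
          rw [ENNReal.tsum_coe_ne_top_iff_summable]
          exact NNReal.summable_coe.mp (by simpa [coe_nnnorm] using hcZnorm)
      _ = ∑' n : ℤ, cZ n * fourierCoeff (T := 1) (⇑(fourier n)) m := by
          refine tsum_congr fun n => ?_
          rw [fourierCoeff]
          rw [← MeasureTheory.integral_const_mul]
          refine integral_congr_ae (Filter.Eventually.of_forall fun x => ?_)
          simp only [smul_eq_mul]; ring
      _ = cZ m := by
          simp_rw [fourierCoeff_fourier]
          rw [tsum_eq_single m (by intro n hn; simp [Ne.symm hn])]
          simp
  have hP := tsum_sq_fourierCoeff (ContinuousMap.toLp (E := ℂ) 2 haarAddCircle ℂ F)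
  simp_rw [fourierCoeff_toLp, hcoeff] at hP
  have hae : ∫ t : AddCircle (1:ℝ),
      ‖(ContinuousMap.toLp (E := ℂ) 2 haarAddCircle ℂ F : AddCircle (1:ℝ) → ℂ) t‖ ^ 2
        ∂haarAddCircle = ∫ t : AddCircle (1:ℝ), ‖F t‖ ^ 2 ∂haarAddCircle := by
    refine integral_congr_ae ?_
    filter_upwards [ContinuousMap.coeFn_toLp (p := 2) haarAddCircle (𝕜 := ℂ) F] with t ht
    rw [ht]
  have hL : ∑' m : ℤ, ‖cZ m‖ ^ 2 = ∑' k : ℕ, ‖c k‖ ^ 2 := by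
    have h : (fun m : ℤ => ‖cZ m‖ ^ 2)
        = fun m : ℤ => Int.rec (fun k => ‖c k‖ ^ 2) (fun _ => (0:ℝ)) m := by
      funext m; cases m with
      | ofNat k => rfl
      | negSucc k => simp [hcZdef]
    rw [h, tsum_int_rec hsq summable_zero, tsum_zero, add_zero]
  have hFx : ∀ x : AddCircle (1:ℝ), F x = ∑' k : ℕ, c k * (fourier 1 x : ℂ) ^ k := by
    intro x
    have h1 : Summable (fun k : ℕ => c k * (fourier 1 x : ℂ) ^ k) := by
      apply Summable.of_norm
      have : ∀ k : ℕ, ‖c k * (fourier 1 x : ℂ) ^ k‖ = ‖c k‖ := by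
        intro k; rw [norm_mul, norm_pow, norm_fourier, one_pow, mul_one]
      exact hc.congr (fun k => (this k).symm)
    have h2 := h1.hasSum.int_rec (hasSum_zero : HasSum (fun _ : ℕ => (0:ℂ)) 0)
    rw [add_zero] at h2
    have h3 : (fun n : ℤ => cZ n * fourier n x)
        = fun n : ℤ => Int.rec (fun k : ℕ => c k * (fourier 1 x : ℂ) ^ k)
            (fun _ : ℕ => (0:ℂ)) n := by
      funext n; cases n with
      | ofNat k =>
          show c k * fourier (k : ℤ) x = c k * (fourier 1 x : ℂ) ^ k
          rw [fourier_nat_pow]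
      | negSucc k => simp [hcZdef]
    refine (hpt x).unique ?_
    rw [h3]
    exact h2
  refine ⟨hsq, ?_⟩
  rw [← hL, hP, hae]
  refine integral_congr_ae (Filter.Eventually.of_forall fun x => ?_)
  show ‖F x‖ ^ 2 = _
  rw [hFx x]

lemma cont_series (c : ℕ → ℂ) (hc : Summable fun k => ‖c k‖) :
    Continuous fun x : AddCircle (1:ℝ) => ∑' k : ℕ, c k * (fourier 1 x : ℂ) ^ k := by
  refine continuous_tsum (fun k => ?_) hc (fun k x => ?_)
  · exact continuous_const.mul ((map_continuous (fourier 1)).pow k)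
  · rw [norm_mul, norm_pow, norm_fourier, one_pow, mul_one]

lemma parseval_mono (c d : ℕ → ℂ) (hc : Summable fun k => ‖c k‖)
    (hd : Summable fun k => ‖d k‖)
    (h : ∀ x : AddCircle (1:ℝ),
      ‖∑' k : ℕ, c k * (fourier 1 x : ℂ) ^ k‖ ≤ ‖∑' k : ℕ, d k * (fourier 1 x : ℂ) ^ k‖) :
    ∑' k : ℕ, ‖c k‖ ^ 2 ≤ ∑' k : ℕ, ‖d k‖ ^ 2 := by
  rw [(parseval_nat c hc).2, (parseval_nat d hd).2]
  have hint : ∀ (e : ℕ → ℂ), Summable (fun k => ‖e k‖) → Integrable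
      (fun x : AddCircle (1:ℝ) => ‖∑' k : ℕ, e k * (fourier 1 x : ℂ) ^ k‖ ^ 2) haarAddCircle := by
    intro e he
    have hco : Continuous fun x : AddCircle (1:ℝ) =>
        ‖∑' k : ℕ, e k * (fourier 1 x : ℂ) ^ k‖ ^ 2 := ((cont_series e he).norm).pow 2
    exact hco.integrable_of_hasCompactSupport
      (IsClosed.isCompact (isClosed_tsupport _))
  exact integral_mono (hint c hc) (hint d hd)
    (fun x => pow_le_pow_left₀ (norm_nonneg _) (h x) 2)


lemma mobius_ineq (α w : ℂ) (hα : ‖α‖ ≤ 1) (hw : ‖w‖ ≤ 1) :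
    ‖w - α‖ ≤ ‖1 - (starRingEnd ℂ) α * w‖ := by
  have hα2 : Complex.normSq α ≤ 1 := by
    rw [Complex.normSq_eq_norm_sq]
    nlinarith [norm_nonneg α]
  have hw2 : Complex.normSq w ≤ 1 := by
    rw [Complex.normSq_eq_norm_sq]
    nlinarith [norm_nonneg w]
  have key : Complex.normSq (1 - (starRingEnd ℂ) α * w) - Complex.normSq (w - α)
      = (1 - Complex.normSq α) * (1 - Complex.normSq w) := by
    simp only [Complex.normSq_apply, Complex.sub_re, Complex.sub_im, Complex.mul_re,
      Complex.mul_im, Complex.one_re, Complex.one_im, Complex.conj_re, Complex.conj_im]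
    ring
  have h1 : Complex.normSq (w - α) ≤ Complex.normSq (1 - (starRingEnd ℂ) α * w) := by
    nlinarith
  rw [Complex.norm_def, Complex.norm_def]
  exact Real.sqrt_le_sqrt h1

variable {g : ℂ → ℂ} {b : ℕ → ℂ}

lemma g_zero (hrep : ∀ z ∈ Metric.ball (0 : ℂ) 1, HasSum (fun k : ℕ => b k * z ^ k) (g z)) :
    g 0 = b 0 := by
  have h0 : (0:ℂ) ∈ Metric.ball (0:ℂ) 1 := by simp
  have h := hrep 0 h0
  have h2 : HasSum (fun k : ℕ => b k * (0:ℂ) ^ k) (b 0) := by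
    have := hasSum_single (f := fun k : ℕ => b k * (0:ℂ) ^ k) 0
      (fun k hk => by simp [zero_pow hk])
    simpa using this
  exact h.unique h2

lemma schwarz_pick (hg : AnalyticOn ℂ g (Metric.ball (0 : ℂ) 1))
    (hrep : ∀ z ∈ Metric.ball (0 : ℂ) 1, HasSum (fun k : ℕ => b k * z ^ k) (g z))
    (hbd : ∀ z ∈ Metric.ball (0 : ℂ) 1, ‖g z‖ ≤ 1)
    (hb0 : ‖b 0‖ < 1) :
    ∀ z ∈ Metric.ball (0 : ℂ) 1,
      ‖g z - b 0‖ ≤ ‖z‖ * ‖1 - (starRingEnd ℂ) (b 0) * g z‖ := by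
  intro z hz
  set φ : ℂ → ℂ := fun w => (g w - b 0) / (1 - (starRingEnd ℂ) (b 0) * g w) with hφdef
  have hden : ∀ w ∈ Metric.ball (0:ℂ) 1, 1 - (starRingEnd ℂ) (b 0) * g w ≠ 0 := by
    intro w hw h
    have h1 : ‖(starRingEnd ℂ) (b 0) * g w‖ < 1 := by
      rw [norm_mul, RCLike.norm_conj]
      calc ‖b 0‖ * ‖g w‖ ≤ ‖b 0‖ * 1 :=
        mul_le_mul_of_nonneg_left (hbd w hw) (norm_nonneg _)
      _ < 1 := by simpa using hb0
    rw [sub_eq_zero] at h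
    rw [← h] at h1
    simp at h1
  have hφd : DifferentiableOn ℂ φ (Metric.ball (0:ℂ) 1) := by
    have hgd : DifferentiableOn ℂ g (Metric.ball (0:ℂ) 1) := hg.differentiableOn
    exact (hgd.sub (differentiableOn_const _)).div
      ((differentiableOn_const _).sub ((differentiableOn_const _).mul hgd)) hden
  have hφbd : ∀ w ∈ Metric.ball (0:ℂ) 1, ‖φ w‖ ≤ 1 := by
    intro w hw
    rw [hφdef]
    simp only [norm_div]
    rw [div_le_one_iff]
    left
    constructor
    · exact (norm_pos_iff).mpr (hden w hw)
    · exact mobius_ineq (b 0) (g w) hb0.le (hbd w hw)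
  have hφ0 : φ 0 = 0 := by
    rw [hφdef]
    simp [g_zero hrep]
  -- Schwarz lemma limit argument
  have hφz : ‖φ z‖ ≤ ‖z‖ := by
    have hzlt : ‖z‖ < 1 := by simpa using hz
    have hev : ∀ᶠ s in 𝓝[<] (1:ℝ), ‖φ z‖ ≤ ‖z‖ / s ^ 2 := by
      filter_upwards [Ioo_mem_nhdsLT_of_mem (show (1:ℝ) ∈ Set.Ioc ‖z‖ 1 by
        exact ⟨hzlt, le_refl 1⟩)] with s hs
      obtain ⟨hs1, hs2⟩ := hs
      have hs0 : 0 < s := lt_of_le_of_lt (norm_nonneg z) hs1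
      have hmaps : MapsTo φ (Metric.ball (0:ℂ) s) (Metric.ball (φ 0) s⁻¹) := by
        intro w hw
        have hw1 : w ∈ Metric.ball (0:ℂ) 1 :=
          Metric.ball_subset_ball hs2.le hw
        rw [hφ0, Metric.mem_ball, dist_zero_right]
        calc ‖φ w‖ ≤ 1 := hφbd w hw1
          _ < s⁻¹ := by
            rw [← one_div]
            exact (lt_div_iff₀ hs0).mpr (by linarith)
      have hd : DifferentiableOn ℂ φ (Metric.ball (0:ℂ) s) :=
        hφd.mono (Metric.ball_subset_ball hs2.le)
      have hzs : z ∈ Metric.ball (0:ℂ) s := by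
        rw [Metric.mem_ball, dist_zero_right]; exact hs1
      have := Complex.dist_le_div_mul_dist_of_mapsTo_ball hd (hmaps.mono_right Metric.ball_subset_closedBall) hzs
      rw [hφ0, dist_zero_right, dist_zero_right] at this
      calc ‖φ z‖ ≤ s⁻¹ / s * ‖z‖ := this
        _ = ‖z‖ / s ^ 2 := by
            rw [sq]
            field_simp
    have hlim : Tendsto (fun s : ℝ => ‖z‖ / s ^ 2) (𝓝[<] (1:ℝ)) (𝓝 (‖z‖ / 1 ^ 2)) := by
      apply Filter.Tendsto.mono_left ?_ nhdsWithin_le_nhds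
      exact (tendsto_const_nhds.div ((continuous_pow 2).tendsto 1) (by norm_num))
    have := ge_of_tendsto hlim hev
    simpa using this
  -- conclude
  have hre : g z - b 0 = φ z * (1 - (starRingEnd ℂ) (b 0) * g z) :=
    (div_mul_cancel₀ _ (hden z hz)).symm
  rw [hre, norm_mul]
  exact mul_le_mul_of_nonneg_right hφz (norm_nonneg _)

lemma coeff_summable (hrep : ∀ z ∈ Metric.ball (0 : ℂ) 1, HasSum (fun k : ℕ => b k * z ^ k) (g z))
    (s : ℝ) (h0 : 0 ≤ s) (h1 : s < 1) : Summable fun k : ℕ => ‖b k‖ * s ^ k := by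
  set z : ℂ := (((s + 1) / 2 : ℝ) : ℂ) with hzdef
  have hz0 : (0:ℝ) < (s + 1) / 2 := by linarith
  have hznorm : ‖z‖ = (s + 1) / 2 := by
    rw [hzdef, Complex.norm_real]
    exact abs_of_pos hz0
  have hzball : z ∈ Metric.ball (0:ℂ) 1 := by
    rw [Metric.mem_ball, dist_zero_right, hznorm]; linarith
  have hsum := (hrep z hzball).summable
  have htend : Tendsto (fun k : ℕ => ‖b k * z ^ k‖) atTop (𝓝 0) := by
    rw [show (0:ℝ) = ‖(0:ℂ)‖ by simp]
    exact (hsum.tendsto_atTop_zero).norm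
  obtain ⟨C, hC⟩ := htend.bddAbove_range
  have hCub : ∀ k : ℕ, ‖b k * z ^ k‖ ≤ C := fun k => hC (Set.mem_range_self k)
  set q : ℝ := s / ((s + 1) / 2) with hqdef
  have hq0 : 0 ≤ q := div_nonneg h0 hz0.le
  have hq1 : q < 1 := by
    rw [hqdef, div_lt_one hz0]; linarith
  refine Summable.of_nonneg_of_le (fun k => mul_nonneg (norm_nonneg _) (pow_nonneg h0 k))
    (fun k => ?_) ((summable_geometric_of_lt_one hq0 hq1).mul_left C)
  have hs_eq : s = (s + 1) / 2 * q := by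
    rw [hqdef]
    field_simp
  have hsk : s ^ k = ((s + 1) / 2) ^ k * q ^ k := by
    rw [← mul_pow, ← hs_eq]
  calc ‖b k‖ * s ^ k = ‖b k‖ * ((s + 1) / 2) ^ k * q ^ k := by
        rw [hsk]; ring
    _ ≤ C * q ^ k := by
        refine mul_le_mul_of_nonneg_right ?_ (pow_nonneg hq0 k)
        calc ‖b k‖ * ((s + 1) / 2) ^ k = ‖b k * z ^ k‖ := by
              rw [norm_mul, norm_pow, hznorm]
          _ ≤ C := hCub k


lemma key (hg : AnalyticOn ℂ g (Metric.ball (0 : ℂ) 1))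
    (hrep : ∀ z ∈ Metric.ball (0 : ℂ) 1, HasSum (fun k : ℕ => b k * z ^ k) (g z))
    (hbd : ∀ z ∈ Metric.ball (0 : ℂ) 1, ‖g z‖ ≤ 1)
    (hb0 : ‖b 0‖ < 1) (ρ : ℝ) (hρ0 : 0 < ρ) (hρ1 : ρ < 1) :
    Summable (fun k : ℕ => ‖b (k+1)‖ ^ 2 * (ρ^2)^(k+1)) ∧
    (∑' k : ℕ, ‖b (k+1)‖ ^ 2 * (ρ^2)^(k+1)) * (1 - ‖b 0‖^2 * ρ^2)
      ≤ ρ^2 * (1 - ‖b 0‖^2)^2 := by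
  classical
  set c : ℕ → ℂ := fun k => b k * (ρ:ℂ)^k - if k = 0 then b 0 else 0 with hcdef
  set d : ℕ → ℂ := fun k =>
    (ρ:ℂ) * ((if k = 0 then 1 else 0) - (starRingEnd ℂ) (b 0) * (b k * (ρ:ℂ)^k)) with hddef
  have hnormρ : ‖(ρ:ℂ)‖ = ρ := by rw [Complex.norm_real]; exact abs_of_pos hρ0
  have hbsum : Summable (fun k : ℕ => b k * (ρ:ℂ)^k) := by
    apply Summable.of_norm
    have h : ∀ k : ℕ, ‖b k * (ρ:ℂ)^k‖ = ‖b k‖ * ρ^k := by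
      intro k; rw [norm_mul, norm_pow, hnormρ]
    exact (coeff_summable hrep ρ hρ0.le hρ1).congr (fun k => (h k).symm)
  have hite : Summable (fun k : ℕ => if k = 0 then b 0 else 0) :=
    (hasSum_ite_eq 0 (b 0)).summable
  have hite1 : Summable (fun k : ℕ => if k = 0 then (1:ℂ) else 0) :=
    (hasSum_ite_eq 0 (1:ℂ)).summable
  have hcsum : Summable c := hbsum.sub hite
  have hdsum : Summable d := (hite1.sub (hbsum.mul_left _)).mul_left _
  have hc : Summable fun k => ‖c k‖ := summable_norm_iff.mpr hcsum
  have hd : Summable fun k => ‖d k‖ := summable_norm_iff.mpr hdsum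
  have hpt : ∀ x : AddCircle (1:ℝ),
      ‖∑' k : ℕ, c k * (fourier 1 x : ℂ)^k‖ ≤ ‖∑' k : ℕ, d k * (fourier 1 x : ℂ)^k‖ := by
    intro x
    set u : ℂ := fourier 1 x with hudef
    have hu : ‖u‖ = 1 := norm_fourier 1 x
    set z : ℂ := (ρ:ℂ) * u with hzdef
    have hznorm : ‖z‖ = ρ := by rw [hzdef, norm_mul, hu, mul_one, hnormρ]
    have hzball : z ∈ Metric.ball (0:ℂ) 1 := by
      rw [Metric.mem_ball, dist_zero_right, hznorm]; exact hρ1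
    have P : HasSum (fun k : ℕ => b k * (ρ:ℂ)^k * u^k) (g z) := by
      have h := hrep z hzball
      have hfun : (fun k : ℕ => b k * z^k) = fun k : ℕ => b k * (ρ:ℂ)^k * u^k := by
        funext k; rw [hzdef, mul_pow]; ring
      rwa [hfun] at h
    have Q : HasSum (fun k : ℕ => if k = 0 then (1:ℂ) else 0) 1 := hasSum_ite_eq 0 (1:ℂ)
    have hSc : HasSum (fun k : ℕ => c k * u^k) (g z - b 0) := by
      have h := P.sub (Q.mul_right (b 0))
      rw [one_mul] at h
      have hfun : (fun k : ℕ => c k * u^k)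
          = fun k : ℕ => b k * (ρ:ℂ)^k * u^k - (if k = 0 then (1:ℂ) else 0) * b 0 := by
        funext k
        by_cases hk : k = 0
        · subst hk; simp [hcdef]
        · simp [hcdef, hk]
      rwa [hfun]
    have hSd : HasSum (fun k : ℕ => d k * u^k)
        ((ρ:ℂ) * (1 - (starRingEnd ℂ) (b 0) * g z)) := by
      have h := (Q.sub (P.mul_left ((starRingEnd ℂ) (b 0)))).mul_left (ρ:ℂ)
      have hfun : (fun k : ℕ => d k * u^k)
          = fun k : ℕ => (ρ:ℂ) * ((if k = 0 then (1:ℂ) else 0)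
              - (starRingEnd ℂ) (b 0) * (b k * (ρ:ℂ)^k * u^k)) := by
        funext k
        by_cases hk : k = 0
        · subst hk; simp [hddef]
        · simp [hddef, hk]; ring
      rwa [hfun]
    rw [hSc.tsum_eq, hSd.tsum_eq]
    have h := schwarz_pick hg hrep hbd hb0 z hzball
    calc ‖g z - b 0‖ ≤ ‖z‖ * ‖1 - (starRingEnd ℂ) (b 0) * g z‖ := h
      _ = ‖(ρ:ℂ) * (1 - (starRingEnd ℂ) (b 0) * g z)‖ := by
          rw [hznorm, norm_mul, hnormρ]
  have main := parseval_mono c d hc hd hpt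
  have hsqc := (parseval_nat c hc).1
  have hsqd := (parseval_nat d hd).1
  have hpow : ∀ k : ℕ, (ρ^(k+1))^2 = (ρ^2)^(k+1) := by
    intro k; rw [← pow_mul, ← pow_mul, Nat.mul_comm]
  have hc0 : c 0 = 0 := by simp [hcdef]
  have hcterm : ∀ k : ℕ, ‖c (k+1)‖^2 = ‖b (k+1)‖^2 * (ρ^2)^(k+1) := by
    intro k
    have : c (k+1) = b (k+1) * (ρ:ℂ)^(k+1) := by simp [hcdef]
    rw [this, norm_mul, norm_pow, hnormρ, mul_pow, hpow]
  have hSummTarget : Summable (fun k : ℕ => ‖b (k+1)‖^2 * (ρ^2)^(k+1)) :=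
    (((summable_nat_add_iff 1).mpr hsqc).congr hcterm)
  have hLHS : ∑' k : ℕ, ‖c k‖^2 = ∑' k : ℕ, ‖b (k+1)‖^2 * (ρ^2)^(k+1) := by
    rw [Summable.tsum_eq_zero_add hsqc, hc0]
    simp only [norm_zero]
    rw [zero_pow (two_ne_zero), zero_add]
    exact tsum_congr hcterm
  have hconj : (starRingEnd ℂ) (b 0) * b 0 = ((‖b 0‖^2 : ℝ) : ℂ) := by
    rw [mul_comm, Complex.mul_conj]
    norm_cast
    rw [Complex.normSq_eq_norm_sq]
  have hd0 : ‖d 0‖^2 = ρ^2 * (1 - ‖b 0‖^2)^2 := by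
    have h1 : d 0 = (ρ:ℂ) * (1 - ((‖b 0‖^2 : ℝ) : ℂ)) := by
      have h0 : d 0 = (ρ:ℂ) * (1 - (starRingEnd ℂ) (b 0) * b 0) := by simp [hddef]
      rw [h0, hconj]
    have h2 : (1 : ℂ) - ((‖b 0‖^2 : ℝ) : ℂ) = (((1 - ‖b 0‖^2 : ℝ)) : ℂ) := by push_cast; ring
    rw [h1, h2, norm_mul, hnormρ, Complex.norm_real, Real.norm_eq_abs,
      abs_of_pos (by nlinarith [norm_nonneg (b 0)] : (0:ℝ) < 1 - ‖b 0‖^2)]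
    ring
  have hdterm : ∀ k : ℕ,
      ‖d (k+1)‖^2 = (‖b 0‖^2 * ρ^2) * (‖b (k+1)‖^2 * (ρ^2)^(k+1)) := by
    intro k
    have h1 : d (k+1) = -((ρ:ℂ) * ((starRingEnd ℂ) (b 0) * (b (k+1) * (ρ:ℂ)^(k+1)))) := by
      simp [hddef]
    rw [h1, norm_neg, norm_mul, norm_mul, norm_mul, hnormρ, RCLike.norm_conj, norm_pow, hnormρ]
    rw [mul_pow, mul_pow, mul_pow, hpow]
    ring
  have hRHS : ∑' k : ℕ, ‖d k‖^2
      = ρ^2 * (1 - ‖b 0‖^2)^2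
        + (‖b 0‖^2 * ρ^2) * ∑' k : ℕ, ‖b (k+1)‖^2 * (ρ^2)^(k+1) := by
    rw [Summable.tsum_eq_zero_add hsqd, hd0]
    congr 1
    rw [← tsum_mul_left]
    exact tsum_congr hdterm
  rw [hLHS, hRHS] at main
  refine ⟨hSummTarget, ?_⟩
  set S := ∑' k : ℕ, ‖b (k+1)‖^2 * (ρ^2)^(k+1) with hSdef
  calc S * (1 - ‖b 0‖^2 * ρ^2) = S - (‖b 0‖^2 * ρ^2) * S := by ring
    _ ≤ ρ^2 * (1 - ‖b 0‖^2)^2 := by linarith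

end CoeffSqAux

/-- Coefficient estimate (Lemma A): `Σ_{k≥1} |b_k|² r^{pk} ≤ r^p (1-|b₀|²)²/(1-|b₀|² r^p)`. -/
theorem coeff_square_tail_estimate (g : ℂ → ℂ) (b : ℕ → ℂ)
    (hg : AnalyticOn ℂ g (Metric.ball (0 : ℂ) 1))
    (hrep : ∀ z ∈ Metric.ball (0 : ℂ) 1, HasSum (fun k : ℕ => b k * z ^ k) (g z))
    (hbd : ∀ z ∈ Metric.ball (0 : ℂ) 1, ‖g z‖ ≤ 1)
    (hb0 : ‖b 0‖ < 1) (r : ℝ) (hr0 : 0 < r) (hr1 : r ≤ 1) (p : ℕ) (hp : 1 ≤ p) :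
    ∑' k : ℕ, ‖b (k + 1)‖ ^ 2 * r ^ (p * (k + 1)) ≤
      r ^ p * (1 - ‖b 0‖ ^ 2) ^ 2 / (1 - ‖b 0‖ ^ 2 * r ^ p) := by
  classical
  open CoeffSqAux in
  simp_rw [pow_mul]
  have ht0 : 0 < r ^ p := pow_pos hr0 p
  have ht1 : r ^ p ≤ 1 := pow_le_one₀ hr0.le hr1
  have hb0nn : (0:ℝ) ≤ ‖b 0‖ := norm_nonneg _
  have hpartial : ∀ s : ℝ, s ∈ Set.Ioo (0:ℝ) 1 → ∀ N : ℕ,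
      (∑ k ∈ Finset.range N, ‖b (k+1)‖^2 * s^(k+1))
        ≤ s * (1 - ‖b 0‖^2)^2 / (1 - ‖b 0‖^2 * s) := by
    intro s hs N
    obtain ⟨hs0, hs1⟩ := hs
    have hρ0 : 0 < Real.sqrt s := Real.sqrt_pos.mpr hs0
    have hρ1 : Real.sqrt s < 1 := by
      rw [show (1:ℝ) = Real.sqrt 1 by simp]
      exact Real.sqrt_lt_sqrt hs0.le hs1
    have hρ2 : Real.sqrt s ^ 2 = s := Real.sq_sqrt hs0.le
    obtain ⟨hsumm, hineq⟩ := CoeffSqAux.key hg hrep hbd hb0 (Real.sqrt s) hρ0 hρ1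
    rw [hρ2] at hsumm hineq
    have hdenS : 0 < 1 - ‖b 0‖^2 * s := by nlinarith
    have htsum_le : (∑' k : ℕ, ‖b (k+1)‖^2 * s^(k+1))
        ≤ s * (1 - ‖b 0‖^2)^2 / (1 - ‖b 0‖^2 * s) := by
      rw [le_div_iff₀ hdenS]
      exact hineq
    refine le_trans ?_ htsum_le
    exact Summable.sum_le_tsum (Finset.range N)
      (fun k _ => mul_nonneg (sq_nonneg _) (pow_nonneg hs0.le _)) hsumm
  have hN : ∀ N : ℕ, (∑ k ∈ Finset.range N, ‖b (k+1)‖^2 * (r^p)^(k+1))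
      ≤ r^p * (1 - ‖b 0‖^2)^2 / (1 - ‖b 0‖^2 * r^p) := by
    intro N
    have hPc : Filter.Tendsto (fun s : ℝ => ∑ k ∈ Finset.range N, ‖b (k+1)‖^2 * s^(k+1))
        (nhdsWithin (r^p) (Set.Iio (r^p)))
        (nhds (∑ k ∈ Finset.range N, ‖b (k+1)‖^2 * (r^p)^(k+1))) := by
      apply Filter.Tendsto.mono_left ?_ nhdsWithin_le_nhds
      apply tendsto_finset_sum
      intro k _
      exact tendsto_const_nhds.mul ((continuous_pow (k+1)).tendsto (r^p))
    have hdent : 0 < 1 - ‖b 0‖^2 * r^p := by nlinarith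
    have hBc : Filter.Tendsto (fun s : ℝ => s * (1 - ‖b 0‖^2)^2 / (1 - ‖b 0‖^2 * s))
        (nhdsWithin (r^p) (Set.Iio (r^p)))
        (nhds (r^p * (1 - ‖b 0‖^2)^2 / (1 - ‖b 0‖^2 * r^p))) := by
      apply Filter.Tendsto.mono_left ?_ nhdsWithin_le_nhds
      exact Filter.Tendsto.div
        ((continuous_id.mul continuous_const).tendsto (r^p))
        ((continuous_const.sub (continuous_const.mul continuous_id)).tendsto (r^p))
        (ne_of_gt hdent)
    have hev : ∀ᶠ s in nhdsWithin (r^p) (Set.Iio (r^p)),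
        (∑ k ∈ Finset.range N, ‖b (k+1)‖^2 * s^(k+1))
          ≤ s * (1 - ‖b 0‖^2)^2 / (1 - ‖b 0‖^2 * s) := by
      filter_upwards [Ioo_mem_nhdsLT_of_mem
        (show r^p ∈ Set.Ioc (0:ℝ) (r^p) from ⟨ht0, le_refl _⟩)] with s hs
      exact hpartial s ⟨hs.1, lt_of_lt_of_le hs.2 ht1⟩ N
    exact le_of_tendsto_of_tendsto hPc hBc hev
  exact Real.tsum_le_of_sum_range_le
    (fun k => mul_nonneg (sq_nonneg _) (pow_nonneg ht0.le _)) hN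
end
end

section
/- Let p ∈ ℕ, 0 ≤ m ≤ p, and f(z) = Σ_{k=0}^∞ a_{pk+m} z^{pk+m} be analytic on the unit disk with |f(z)| < 1. If |a_m| < r then Σ_{k=1}^∞ |a_{pk+m}| r^{pk} ≤ r^p √(1 - |a_m|^2)/√(1 - r^{2p}). -/
open MeasureTheory Filter Finset AddCircle Topology

noncomputable section

namespace TailEstimateAux

local notation "⟪" x ", " y "⟫" => @inner ℂ _ _ x y

lemma integral_fourier_eq_zero {T : ℝ} [hT : Fact (0 < T)] {j : ℤ} (hj : j ≠ 0) :
    ∫ t : AddCircle T, fourier j t ∂haarAddCircle = 0 := by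
  have h1 : ∫ t : AddCircle T, fourier j (t + (↑(T / 2 / (j : ℝ)) : AddCircle T)) ∂haarAddCircle
      = ∫ t : AddCircle T, fourier j t ∂haarAddCircle :=
    integral_add_right_eq_self _ _
  have h2 : ∀ t : AddCircle T, fourier j (t + (↑(T / 2 / (j : ℝ)) : AddCircle T)) = -fourier j t :=
    fun t => fourier_add_half_inv_index hj hT.out t
  simp_rw [h2, integral_neg] at h1
  linear_combination (-1/2 : ℂ) * h1

lemma fourier_natCast_eq_pow {T : ℝ} (n : ℕ) (x : AddCircle T) :
    fourier (n : ℤ) x = (toCircle x : ℂ) ^ n := by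
  induction n with
  | zero => simpa using fourier_zero
  | succ k ih =>
    have h : ((k + 1 : ℕ) : ℤ) = (k : ℤ) + 1 := by push_cast; ring
    rw [h, fourier_add, ih, fourier_one, pow_succ]

lemma summable_coeff (p m : ℕ) (hp : 1 ≤ p) (a : ℕ → ℂ)
    (hsum : ∀ z ∈ Metric.ball (0 : ℂ) 1,
      Summable (fun k : ℕ => a (p * k + m) * z ^ (p * k + m)))
    {ρ : ℝ} (hρ0 : 0 ≤ ρ) (hρ1 : ρ < 1) :
    Summable fun k : ℕ => ‖a (p * k + m)‖ * ρ ^ (p * k + m) := by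
  obtain ⟨σ, hρσ, hσ1⟩ : ∃ σ : ℝ, ρ < σ ∧ σ < 1 := ⟨(ρ + 1) / 2, by linarith, by linarith⟩
  have hσ0 : 0 < σ := lt_of_le_of_lt hρ0 hρσ
  have hz : (σ : ℂ) ∈ Metric.ball (0 : ℂ) 1 := by
    simp only [Metric.mem_ball, dist_zero_right, Complex.norm_real, Real.norm_eq_abs,
      abs_of_pos hσ0]
    exact hσ1
  have h1 := hsum _ hz
  have h2 : Tendsto (fun k => ‖a (p * k + m) * (σ : ℂ) ^ (p * k + m)‖) atTop (𝓝 0) := by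
    simpa using h1.tendsto_atTop_zero.norm
  obtain ⟨C, hC⟩ := h2.bddAbove_range
  have hCb : ∀ k : ℕ, ‖a (p * k + m)‖ * σ ^ (p * k + m) ≤ C := by
    intro k
    have := hC (Set.mem_range_self k)
    simpa [norm_mul, norm_pow, Complex.norm_real, Real.norm_eq_abs, abs_of_pos hσ0] using this
  have hq0 : 0 ≤ ρ / σ := div_nonneg hρ0 hσ0.le
  have hq1 : ρ / σ ≤ 1 := by
    rw [div_le_one hσ0]; exact hρσ.le
  have hqlt : ρ / σ < 1 := (div_lt_one hσ0).2 hρσ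
  refine Summable.of_nonneg_of_le (fun k => by positivity) (fun k => ?_)
    ((summable_geometric_of_lt_one hq0 hqlt).mul_left C)
  have hk : k ≤ p * k + m := le_trans (Nat.le_mul_of_pos_left k (by omega)) (Nat.le_add_right _ _)
  have key : ‖a (p * k + m)‖ * ρ ^ (p * k + m)
      = (‖a (p * k + m)‖ * σ ^ (p * k + m)) * (ρ / σ) ^ (p * k + m) := by
    rw [div_pow]
    field_simp
  rw [key]
  have h3 : (ρ / σ) ^ (p * k + m) ≤ (ρ / σ) ^ k := pow_le_pow_of_le_one hq0 hq1 hk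
  have hC0 : 0 ≤ C := le_trans (by positivity) (hCb 0)
  calc (‖a (p * k + m)‖ * σ ^ (p * k + m)) * (ρ / σ) ^ (p * k + m)
      ≤ C * (ρ / σ) ^ k := by
        apply mul_le_mul (hCb k) h3 (by positivity) hC0
lemma bessel_sum (p m : ℕ) (hp : 1 ≤ p) (f : ℂ → ℂ) (a : ℕ → ℂ)
    (hf : AnalyticOn ℂ f (Metric.ball (0 : ℂ) 1))
    (hrep : ∀ z ∈ Metric.ball (0 : ℂ) 1,
      HasSum (fun k : ℕ => a (p * k + m) * z ^ (p * k + m)) (f z))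
    (hbd : ∀ z ∈ Metric.ball (0 : ℂ) 1, ‖f z‖ < 1)
    {ρ : ℝ} (hρ0 : 0 ≤ ρ) (hρ1 : ρ < 1) (s : Finset ℕ) :
    ∑ k ∈ s, (‖a (p * k + m)‖ * ρ ^ (p * k + m)) ^ 2 ≤ 1 := by
  haveI : Fact (0 < (1 : ℝ)) := ⟨one_pos⟩
  have hmem : ∀ x : AddCircle (1 : ℝ), ((ρ : ℂ) * toCircle x) ∈ Metric.ball (0 : ℂ) 1 := by
    intro x
    rw [Metric.mem_ball, dist_zero_right, norm_mul]
    simp only [Circle.norm_coe, mul_one, Complex.norm_real, Real.norm_eq_abs]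
    rwa [abs_of_nonneg hρ0]
  set g : C(AddCircle (1 : ℝ), ℂ) :=
    ⟨fun x => f ((ρ : ℂ) * toCircle x),
     hf.continuousOn.comp_continuous
       (continuous_const.mul (continuous_induced_dom.comp continuous_toCircle)) hmem⟩ with hgdef
  have hgval : ∀ x, g x = f ((ρ : ℂ) * toCircle x) := fun _ => rfl
  -- norm of terms
  have hnorm_c : ∀ k : ℕ, ‖a (p * k + m) * (ρ : ℂ) ^ (p * k + m)‖
      = ‖a (p * k + m)‖ * ρ ^ (p * k + m) := by
    intro k
    rw [norm_mul, norm_pow, Complex.norm_real, Real.norm_eq_abs, abs_of_nonneg hρ0]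
  have hsummable : Summable fun k : ℕ => ‖a (p * k + m)‖ * ρ ^ (p * k + m) :=
    summable_coeff p m hp a (fun z hz => (hrep z hz).summable) hρ0 hρ1
  -- Fourier coefficients of g
  have hcoeff : ∀ k0 : ℕ, fourierCoeff (⇑g) ((p * k0 + m : ℕ) : ℤ)
      = a (p * k0 + m) * (ρ : ℂ) ^ (p * k0 + m) := by
    intro k0
    set n : ℤ := ((p * k0 + m : ℕ) : ℤ) with hn
    set F : ℕ → AddCircle (1 : ℝ) → ℂ :=
      fun k t => (a (p * k + m) * (ρ : ℂ) ^ (p * k + m)) * fourier (((p * k + m : ℕ) : ℤ) - n) t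
      with hF
    have hFint : ∀ k, Integrable (F k) haarAddCircle := by
      intro k
      exact (continuous_const.mul (map_continuous (fourier _))).integrable_of_hasCompactSupport
        (HasCompactSupport.of_compactSpace _)
    have hnormF : ∀ k t, ‖F k t‖ = ‖a (p * k + m)‖ * ρ ^ (p * k + m) := by
      intro k t
      simp only [hF, norm_mul]
      have h1 : ‖(fourier (((p * k + m : ℕ) : ℤ) - n)) t‖ = 1 := by
        simp [fourier_apply, Circle.norm_coe]
      rw [h1, mul_one, ← norm_mul, hnorm_c]
    have hsumnorm : Summable fun k => ∫ t, ‖F k t‖ ∂haarAddCircle := by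
      have : (fun k => ∫ t, ‖F k t‖ ∂haarAddCircle)
          = fun k => ‖a (p * k + m)‖ * ρ ^ (p * k + m) := by
        funext k
        simp only [hnormF, integral_const, probReal_univ, smul_eq_mul, one_mul]
      rw [this]
      exact hsummable
    have hps : ∀ t, HasSum (fun k => F k t) (fourier (-n) t • g t) := by
      intro t
      have h0 := (hrep _ (hmem t)).mul_left (fourier (-n) t)
      have hterm : (fun k : ℕ => fourier (-n) t * (a (p * k + m)
          * ((ρ : ℂ) * toCircle t) ^ (p * k + m))) = fun k => F k t := by
        funext k
        simp only [hF]
        rw [sub_eq_neg_add, fourier_add, fourier_natCast_eq_pow, mul_pow]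
        ring
      rw [hterm] at h0
      rw [hgval, smul_eq_mul]
      exact h0
    have hswap := hasSum_integral_of_summable_integral_norm hFint hsumnorm
    have htsum : (fun t => ∑' k, F k t) = fun t => fourier (-n) t • g t :=
      funext fun t => (hps t).tsum_eq
    rw [htsum] at hswap
    have hIk : ∀ k, (∫ t, F k t ∂haarAddCircle)
        = if k = k0 then a (p * k0 + m) * (ρ : ℂ) ^ (p * k0 + m) else 0 := by
      intro k
      simp only [hF]
      by_cases hk : k = k0
      · subst hk
        rw [if_pos rfl]
        have h0 : (fun t : AddCircle (1 : ℝ) =>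
            a (p * k + m) * (ρ : ℂ) ^ (p * k + m) * (fourier (((p * k + m : ℕ) : ℤ) - n)) t)
            = fun _ => a (p * k + m) * (ρ : ℂ) ^ (p * k + m) := by
          funext t
          simp only [hn, sub_self]
          rw [fourier_zero, mul_one]
        rw [h0, integral_const]
        simp [measure_univ]
      · have hj : ((p * k + m : ℕ) : ℤ) - n ≠ 0 := by
          simp only [hn, sub_ne_zero]
          intro hcontra
          apply hk
          have h1 : p * k + m = p * k0 + m := by exact_mod_cast hcontra
          have h2 := Nat.add_right_cancel h1
          exact Nat.eq_of_mul_eq_mul_left (by omega) h2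
        rw [MeasureTheory.integral_const_mul, integral_fourier_eq_zero hj, mul_zero, if_neg hk]
    rw [funext hIk] at hswap
    have hdelta : HasSum (fun k => if k = k0 then a (p * k0 + m) * (ρ : ℂ) ^ (p * k0 + m) else 0)
        (a (p * k0 + m) * (ρ : ℂ) ^ (p * k0 + m)) := hasSum_ite_eq k0 _
    have : fourierCoeff (⇑g) n = ∫ t, fourier (-n) t • g t ∂haarAddCircle := rfl
    rw [this]
    exact hswap.unique hdelta
  -- Bessel's inequality
  set gL := ContinuousMap.toLp (E := ℂ) 2 haarAddCircle ℂ g with hgL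
  have hrepr : ∀ i : ℤ, ⟪(fourierLp 2 i : Lp ℂ 2 haarAddCircle), gL⟫ = fourierCoeff (⇑g) i := by
    intro i
    rw [show (fourierLp 2 i : Lp ℂ 2 haarAddCircle) = fourierBasis i from
      by rw [coe_fourierBasis]]
    rw [← fourierBasis.repr_apply_apply gL i, fourierBasis_repr, hgL, fourierCoeff_toLp]
  have hgnorm : ‖g‖ ≤ 1 :=
    (ContinuousMap.norm_le _ zero_le_one).2 fun x => (hbd _ (hmem x)).le
  have hopnorm : ‖gL‖ ≤ 1 := by
    calc ‖gL‖ ≤ ‖(ContinuousMap.toLp (E := ℂ) 2 haarAddCircle ℂ :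
          C(AddCircle (1:ℝ), ℂ) →L[ℂ] Lp ℂ 2 haarAddCircle)‖ * ‖g‖ :=
        ContinuousLinearMap.le_opNorm _ _
      _ ≤ 1 * 1 := by
        apply mul_le_mul _ hgnorm (norm_nonneg _) zero_le_one
        refine (ContinuousMap.toLp_norm_le _).trans ?_
        simp [measureUnivNNReal, measure_univ]
      _ = 1 := one_mul 1
  have hBessel := orthonormal_fourier.sum_inner_products_le
    (s := s.image fun k => ((p * k + m : ℕ) : ℤ)) gL
  have hinj : Set.InjOn (fun k : ℕ => ((p * k + m : ℕ) : ℤ)) s := by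
    intro x _ y _ hxy
    have hxy' : ((p * x + m : ℕ) : ℤ) = ((p * y + m : ℕ) : ℤ) := hxy
    have : p * x + m = p * y + m := by exact_mod_cast hxy' 
    have := Nat.add_right_cancel this
    exact Nat.eq_of_mul_eq_mul_left (by omega) this
  rw [Finset.sum_image hinj] at hBessel
  have heq : ∀ k ∈ s, ‖⟪(fourierLp 2 ((p * k + m : ℕ) : ℤ) : Lp ℂ 2 haarAddCircle), gL⟫‖ ^ 2
      = (‖a (p * k + m)‖ * ρ ^ (p * k + m)) ^ 2 := by
    intro k _
    rw [hrepr, hcoeff, hnorm_c]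
  rw [Finset.sum_congr rfl heq] at hBessel
  calc ∑ k ∈ s, (‖a (p * k + m)‖ * ρ ^ (p * k + m)) ^ 2 ≤ ‖gL‖ ^ 2 := hBessel
    _ ≤ 1 := by
      have := pow_le_one₀ (norm_nonneg gL) hopnorm (n := 2)
      exact this

lemma bessel_limit (p m : ℕ) (hp : 1 ≤ p) (f : ℂ → ℂ) (a : ℕ → ℂ)
    (hf : AnalyticOn ℂ f (Metric.ball (0 : ℂ) 1))
    (hrep : ∀ z ∈ Metric.ball (0 : ℂ) 1,
      HasSum (fun k : ℕ => a (p * k + m) * z ^ (p * k + m)) (f z))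
    (hbd : ∀ z ∈ Metric.ball (0 : ℂ) 1, ‖f z‖ < 1)
    (s : Finset ℕ) :
    ‖a m‖ ^ 2 + ∑ k ∈ s, ‖a (p * (k + 1) + m)‖ ^ 2 ≤ 1 := by
  set G : ℝ → ℝ := fun ρ => (‖a m‖ * ρ ^ m) ^ 2
    + ∑ k ∈ s, (‖a (p * (k + 1) + m)‖ * ρ ^ (p * (k + 1) + m)) ^ 2 with hG
  have h : ∀ ρ ∈ Set.Ioo (0 : ℝ) 1, G ρ ≤ 1 := by
    intro ρ hρ
    have hb := bessel_sum p m hp f a hf hrep hbd hρ.1.le hρ.2 (insert 0 (s.image (· + 1)))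
    rw [Finset.sum_insert (by simp), Finset.sum_image (fun x _ y _ h => by omega)] at hb
    simpa [hG] using hb
  have hc : Continuous G := by
    apply Continuous.add
    · exact (continuous_const.mul (continuous_pow m)).pow 2
    · exact continuous_finset_sum s fun k _ => (continuous_const.mul (continuous_pow _)).pow 2
  have ht : Tendsto G (𝓝[<] (1 : ℝ)) (𝓝 (G 1)) := (hc.tendsto 1).mono_left nhdsWithin_le_nhds
  have hle : G 1 ≤ 1 := le_of_tendsto ht
    (Filter.eventually_of_mem (Ioo_mem_nhdsLT_of_mem ⟨zero_lt_one, le_refl 1⟩) h)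
  simpa [hG] using hle

end TailEstimateAux

/-- Lemma C, second case: tail estimate for series supported on exponents `pk+m`,
when `|a_m| < r`. -/
theorem tail_estimate_lacunary_small (p m : ℕ) (hp : 1 ≤ p) (hm : m ≤ p)
    (f : ℂ → ℂ) (a : ℕ → ℂ)
    (hf : AnalyticOn ℂ f (Metric.ball (0 : ℂ) 1))
    (hrep : ∀ z ∈ Metric.ball (0 : ℂ) 1,
      HasSum (fun k : ℕ => a (p * k + m) * z ^ (p * k + m)) (f z))
    (hbd : ∀ z ∈ Metric.ball (0 : ℂ) 1, ‖f z‖ < 1)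
    (r : ℝ) (hr0 : 0 < r) (hr1 : r < 1) (ham : ‖a m‖ < r) :
    ∑' k : ℕ, ‖a (p * (k + 1) + m)‖ * r ^ (p * (k + 1)) ≤
      r ^ p * Real.sqrt (1 - ‖a m‖ ^ 2) / Real.sqrt (1 - r ^ (2 * p)) := by
  have hsq : ∀ s : Finset ℕ,
      ∑ k ∈ s, ‖a (p * (k + 1) + m)‖ ^ 2 ≤ 1 - ‖a m‖ ^ 2 := by
    intro s
    have := TailEstimateAux.bessel_limit p m hp f a hf hrep hbd s
    linarith
  have ham1 : ‖a m‖ ^ 2 ≤ 1 := by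
    have h0 := hsq ∅
    simp only [Finset.sum_empty] at h0
    linarith
  have hr2p1 : r ^ (2 * p) < 1 := pow_lt_one₀ hr0.le hr1 (by omega)
  have hr2p0 : 0 < 1 - r ^ (2 * p) := by linarith
  have hRnn : 0 ≤ r ^ p * Real.sqrt (1 - ‖a m‖ ^ 2) / Real.sqrt (1 - r ^ (2 * p)) := by
    positivity
  apply tsum_le_of_sum_le' hRnn
  intro s
  have hCS := Finset.sum_mul_sq_le_sq_mul_sq s (fun k => ‖a (p * (k + 1) + m)‖)
    (fun k => r ^ (p * (k + 1)))
  have hgeo : ∑ k ∈ s, (r ^ (p * (k + 1))) ^ 2 ≤ r ^ (2 * p) * (1 - r ^ (2 * p))⁻¹ := by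
    have hterm : ∀ k : ℕ, (r ^ (p * (k + 1))) ^ 2 = r ^ (2 * p) * (r ^ (2 * p)) ^ k := by
      intro k
      rw [← pow_mul, ← pow_mul, ← pow_add]
      congr 1
      ring
    calc ∑ k ∈ s, (r ^ (p * (k + 1))) ^ 2 = ∑ k ∈ s, r ^ (2 * p) * (r ^ (2 * p)) ^ k :=
          Finset.sum_congr rfl fun k _ => hterm k
      _ ≤ ∑' k : ℕ, r ^ (2 * p) * (r ^ (2 * p)) ^ k :=
          Summable.sum_le_tsum s (fun k _ => by positivity)
            ((summable_geometric_of_lt_one (by positivity) hr2p1).mul_left _)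
      _ = r ^ (2 * p) * (1 - r ^ (2 * p))⁻¹ := by
          rw [tsum_mul_left, tsum_geometric_of_lt_one (by positivity) hr2p1]
  have hS2 : (∑ k ∈ s, ‖a (p * (k + 1) + m)‖ * r ^ (p * (k + 1))) ^ 2
      ≤ (1 - ‖a m‖ ^ 2) * (r ^ (2 * p) * (1 - r ^ (2 * p))⁻¹) := by
    refine hCS.trans ?_
    apply mul_le_mul (hsq s) hgeo (Finset.sum_nonneg fun k _ => by positivity) (by linarith)
  have hSnn : 0 ≤ ∑ k ∈ s, ‖a (p * (k + 1) + m)‖ * r ^ (p * (k + 1)) :=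
    Finset.sum_nonneg fun k _ => by positivity
  calc ∑ k ∈ s, ‖a (p * (k + 1) + m)‖ * r ^ (p * (k + 1))
      = Real.sqrt ((∑ k ∈ s, ‖a (p * (k + 1) + m)‖ * r ^ (p * (k + 1))) ^ 2) :=
        (Real.sqrt_sq hSnn).symm
    _ ≤ Real.sqrt ((1 - ‖a m‖ ^ 2) * (r ^ (2 * p) * (1 - r ^ (2 * p))⁻¹)) :=
        Real.sqrt_le_sqrt hS2
    _ = r ^ p * Real.sqrt (1 - ‖a m‖ ^ 2) / Real.sqrt (1 - r ^ (2 * p)) := by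
        rw [Real.sqrt_mul (by linarith), Real.sqrt_mul (by positivity), Real.sqrt_inv]
        have h1 : Real.sqrt (r ^ (2 * p)) = r ^ p := by
          rw [show 2 * p = p * 2 by ring, pow_mul, Real.sqrt_sq (by positivity)]
        rw [h1, div_eq_mul_inv]
        ring
end
end

section
/- If f(z) = Σ_{k=0}^∞ a_k z^k is analytic on the unit disk with |f(z)| ≤ 1 and 0 < r < 1 with |a_0| < r, then Σ_{k=1}^∞ |a_k| r^k ≤ r √(1 - |a_0|^2)/√(1 - r^2). -/
open Complex Filter Finset

/-- Orthogonality of roots of unity: geometric sums. -/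
private lemma roots_orthogonality (M : ℕ) (hM : 0 < M) (k l : ℕ) (hk : k < M) (hl : l < M) :
    ∑ j ∈ Finset.range M,
        (Complex.exp (2 * Real.pi * Complex.I / M) ^ k *
          Complex.exp (-(2 * Real.pi * Complex.I / M)) ^ l) ^ j
      = if k = l then (M : ℂ) else 0 := by
  set t : ℂ := 2 * Real.pi * Complex.I / M with ht
  have hMne : (M : ℂ) ≠ 0 := Nat.cast_ne_zero.2 hM.ne'
  have hu : Complex.exp t ^ k * Complex.exp (-t) ^ l
      = Complex.exp ((((k : ℤ) - l : ℤ) : ℂ) * t) := by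
    rw [← Complex.exp_nat_mul, ← Complex.exp_nat_mul, ← Complex.exp_add]
    congr 1
    push_cast
    ring
  rw [hu]
  rcases eq_or_ne k l with hkl | hkl
  · simp [hkl]
  · rw [if_neg hkl]
    have hune : Complex.exp ((((k : ℤ) - l : ℤ) : ℂ) * t) ≠ 1 := by
      intro h
      obtain ⟨m, hm⟩ := Complex.exp_eq_one_iff.1 h
      rw [ht] at hm
      have h2 : (2 * Real.pi * Complex.I : ℂ) ≠ 0 := by
        simp [Real.pi_ne_zero, Complex.I_ne_zero, Complex.ofReal_ne_zero]
      have hm' : ((k : ℂ) - l) = (m : ℂ) * M := by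
        field_simp at hm
        apply mul_right_cancel₀ h2
        push_cast at hm
        linear_combination (2 * (Real.pi : ℂ) * Complex.I) * hm
      have hm2 : ((k : ℤ) - l) = m * M := by exact_mod_cast hm'
      have hMZ : (0 : ℤ) < (M : ℤ) := by exact_mod_cast hM
      have hkZ : (k : ℤ) < M := by exact_mod_cast hk
      have hlZ : (l : ℤ) < M := by exact_mod_cast hl
      have hk0 : (0 : ℤ) ≤ k := Int.ofNat_nonneg k
      have hl0 : (0 : ℤ) ≤ l := Int.ofNat_nonneg l
      rcases lt_trichotomy m 0 with h3 | h3 | h3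
      · have h4 : m * (M : ℤ) ≤ -1 * M :=
          mul_le_mul_of_nonneg_right (by omega) hMZ.le
        linarith
      · apply hkl
        have : (k : ℤ) = l := by rw [h3] at hm2; omega
        exact_mod_cast this
      · have h4 : 1 * (M : ℤ) ≤ m * M :=
          mul_le_mul_of_nonneg_right (by omega) hMZ.le
        linarith
    rw [geom_sum_eq hune]
    have : Complex.exp ((((k : ℤ) - l : ℤ) : ℂ) * t) ^ M = 1 := by
      rw [← Complex.exp_nat_mul]
      have : (M : ℂ) * ((((k : ℤ) - l : ℤ) : ℂ) * t) = (((k : ℤ) - l : ℤ) : ℂ) * (2 * Real.pi * Complex.I) := by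
        rw [ht]; field_simp
      rw [this, Complex.exp_int_mul_two_pi_mul_I]
    rw [this]
    simp

private lemma norm_exp_unit (M : ℕ) : ‖Complex.exp (2 * Real.pi * Complex.I / M)‖ = 1 := by
  rw [Complex.norm_exp]
  have h : (2 * Real.pi * Complex.I / (M : ℂ)) = ((2 * Real.pi / M : ℝ) : ℂ) * Complex.I := by
    push_cast; ring
  rw [h]
  simp

private lemma finite_parseval (c : ℕ → ℂ) (N M : ℕ) (hNM : N < M) :
    ∑ j ∈ Finset.range M,
        ‖∑ k ∈ Finset.range (N + 1),
            c k * (Complex.exp (2 * Real.pi * Complex.I / M) ^ k) ^ j‖ ^ 2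
      = M * ∑ k ∈ Finset.range (N + 1), ‖c k‖ ^ 2 := by
  have hM : 0 < M := lt_of_le_of_lt (Nat.zero_le N) hNM
  set t : ℂ := 2 * Real.pi * Complex.I / M with ht
  have hconj : (starRingEnd ℂ) (Complex.exp t) = Complex.exp (-t) := by
    rw [← Complex.exp_conj]
    congr 1
    rw [ht]
    simp [map_div₀, map_mul, map_ofNat, Complex.conj_I]
    ring
  have main : ∑ j ∈ Finset.range M,
      ((∑ k ∈ Finset.range (N + 1), c k * (Complex.exp t ^ k) ^ j) *
        (starRingEnd ℂ) (∑ k ∈ Finset.range (N + 1), c k * (Complex.exp t ^ k) ^ j))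
      = (M : ℂ) * ∑ k ∈ Finset.range (N + 1), c k * (starRingEnd ℂ) (c k) := by
    have expand : ∀ j ∈ Finset.range M,
        (∑ k ∈ Finset.range (N + 1), c k * (Complex.exp t ^ k) ^ j) *
          (starRingEnd ℂ) (∑ k ∈ Finset.range (N + 1), c k * (Complex.exp t ^ k) ^ j)
        = ∑ k ∈ Finset.range (N + 1), ∑ l ∈ Finset.range (N + 1),
            (c k * (starRingEnd ℂ) (c l)) * (Complex.exp t ^ k * Complex.exp (-t) ^ l) ^ j := by
      intro j _
      rw [map_sum, Finset.sum_mul_sum]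
      refine Finset.sum_congr rfl fun k _ => Finset.sum_congr rfl fun l _ => ?_
      rw [map_mul, map_pow, map_pow, hconj, mul_pow]
      ring
    rw [Finset.sum_congr rfl expand, Finset.sum_comm, Finset.mul_sum]
    refine Finset.sum_congr rfl fun k hk => ?_
    rw [Finset.sum_comm]
    have inner : ∀ l ∈ Finset.range (N + 1),
        ∑ j ∈ Finset.range M,
            (c k * (starRingEnd ℂ) (c l)) * (Complex.exp t ^ k * Complex.exp (-t) ^ l) ^ j
        = if k = l then c k * (starRingEnd ℂ) (c l) * M else 0 := by
      intro l hl
      rw [← Finset.mul_sum,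
        roots_orthogonality M hM k l
          (lt_of_lt_of_le (Finset.mem_range.1 hk) hNM)
          (lt_of_lt_of_le (Finset.mem_range.1 hl) hNM)]
      split_ifs with h
      · ring
      · exact mul_zero _
    rw [Finset.sum_congr rfl inner, Finset.sum_ite_eq, if_pos hk]
    ring
  have cast_eq : ∀ z : ℂ, z * (starRingEnd ℂ) z = ((‖z‖ ^ 2 : ℝ) : ℂ) := by
    intro z
    rw [Complex.mul_conj]
    norm_cast
    rw [Complex.normSq_eq_norm_sq]
  simp only [cast_eq] at main
  exact_mod_cast main

private lemma sum_norm_sq_le_one (f : ℂ → ℂ) (a : ℕ → ℂ)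
    (hrep : ∀ z ∈ Metric.ball (0 : ℂ) 1, HasSum (fun k : ℕ => a k * z ^ k) (f z))
    (hbd : ∀ z ∈ Metric.ball (0 : ℂ) 1, ‖f z‖ ≤ 1) (n : ℕ) :
    ∑ k ∈ Finset.range (n + 1), ‖a k‖ ^ 2 ≤ 1 := by
  have key : ∀ s : ℝ, 0 < s → s < 1 →
      ∑ k ∈ Finset.range (n + 1), (‖a k‖ * s ^ k) ^ 2 ≤ 1 := by
    intro s hs0 hs1
    set s' : ℝ := (1 + s) / 2 with hs'def
    have hss' : s < s' := by rw [hs'def]; linarith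
    have hs'1 : s' < 1 := by rw [hs'def]; linarith
    have hs'0 : 0 < s' := by rw [hs'def]; linarith
    have hz' : ((s' : ℂ)) ∈ Metric.ball (0 : ℂ) 1 := by
      rw [Metric.mem_ball, dist_zero_right, Complex.norm_real, Real.norm_eq_abs, abs_of_pos hs'0]
      exact hs'1
    obtain ⟨C, hC⟩ : ∃ C, ∀ k : ℕ, ‖a k‖ * s' ^ k ≤ C := by
      have h0 : Filter.Tendsto (fun k => ‖a k * (s' : ℂ) ^ k‖) Filter.atTop (nhds 0) := by
        simpa using ((hrep _ hz').summable.tendsto_atTop_zero).norm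
      obtain ⟨C, hC⟩ := h0.bddAbove_range
      refine ⟨C, fun k => ?_⟩
      have := hC ⟨k, rfl⟩
      simpa [norm_mul, norm_pow, Complex.norm_real, Real.norm_eq_abs,
        abs_of_pos hs'0] using this
    set h : ℕ → ℝ := fun k => ‖a k‖ * s ^ k with hhdef
    have hnonneg : ∀ k, 0 ≤ h k := fun k =>
      mul_nonneg (norm_nonneg _) (pow_nonneg hs0.le _)
    have hsum : Summable h := by
      have hq0 : 0 ≤ s / s' := div_nonneg hs0.le hs'0.le
      have hq1 : s / s' < 1 := (div_lt_one hs'0).2 hss'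
      refine Summable.of_nonneg_of_le hnonneg (fun k => ?_)
        ((summable_geometric_of_lt_one hq0 hq1).mul_left C)
      have hk := hC k
      have : h k = (‖a k‖ * s' ^ k) * (s / s') ^ k := by
        rw [hhdef]
        simp only [div_pow]
        field_simp
      rw [this]
      exact mul_le_mul_of_nonneg_right hk (pow_nonneg hq0 _)
    set ε : ℕ → ℝ := fun N => ∑' k, h (k + N) with hεdef
    have hεt : Filter.Tendsto ε Filter.atTop (nhds 0) := tendsto_sum_nat_add h
    have bound : ∀ N, n ≤ N →
        ∑ k ∈ Finset.range (n + 1), (‖a k‖ * s ^ k) ^ 2 ≤ (1 + ε (N + 1)) ^ 2 := by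
      intro N hN
      set M := 2 * N + 2 with hMdef
      have hNM : N < M := by omega
      set ζ : ℂ := Complex.exp (2 * Real.pi * Complex.I / M) with hζdef
      have hζ1 : ‖ζ‖ = 1 := norm_exp_unit M
      have hP : ∀ z : ℂ, ‖z‖ = s →
          ‖∑ k ∈ Finset.range (N + 1), a k * z ^ k‖ ≤ 1 + ε (N + 1) := by
        intro z hz
        have hzb : z ∈ Metric.ball (0 : ℂ) 1 := by
          rw [Metric.mem_ball, dist_zero_right, hz]; exact hs1
        have h1 := hrep z hzb
        have h2 : HasSum (fun k => a (k + (N + 1)) * z ^ (k + (N + 1)))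
            (f z - ∑ i ∈ Finset.range (N + 1), a i * z ^ i) := by
          refine (hasSum_nat_add_iff (f := fun k => a k * z ^ k) (N + 1)).2 ?_
          simpa using h1
        have hsn : Summable fun k => ‖a (k + (N + 1)) * z ^ (k + (N + 1))‖ := by
          have : (fun k => ‖a (k + (N + 1)) * z ^ (k + (N + 1))‖)
              = fun k => h (k + (N + 1)) := by
            funext k
            rw [norm_mul, norm_pow, hz]
          rw [this]
          exact (summable_nat_add_iff (N + 1)).2 hsum
        have h3 : ‖f z - ∑ i ∈ Finset.range (N + 1), a i * z ^ i‖ ≤ ε (N + 1) := by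
          rw [← h2.tsum_eq]
          refine le_trans (norm_tsum_le_tsum_norm hsn) (le_of_eq (tsum_congr fun k => ?_))
          rw [norm_mul, norm_pow, hz]
        calc ‖∑ k ∈ Finset.range (N + 1), a k * z ^ k‖
            = ‖f z - (f z - ∑ k ∈ Finset.range (N + 1), a k * z ^ k)‖ := by
              rw [sub_sub_cancel]
          _ ≤ ‖f z‖ + ‖f z - ∑ k ∈ Finset.range (N + 1), a k * z ^ k‖ := norm_sub_le _ _
          _ ≤ 1 + ε (N + 1) := add_le_add (hbd z hzb) h3
      have hpars := finite_parseval (fun k => a k * (s : ℂ) ^ k) N M hNM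
      have hε0 : 0 ≤ ε (N + 1) := tsum_nonneg fun k => hnonneg _
      have hQ : ∀ j : ℕ, ∑ k ∈ Finset.range (N + 1), (a k * (s : ℂ) ^ k) * (ζ ^ k) ^ j
          = ∑ k ∈ Finset.range (N + 1), a k * ((s : ℂ) * ζ ^ j) ^ k := by
        intro j
        refine Finset.sum_congr rfl fun k _ => ?_
        rw [mul_pow, ← pow_mul, mul_comm k j, pow_mul]
        ring
      have hsum_le : ∑ j ∈ Finset.range M,
          ‖∑ k ∈ Finset.range (N + 1), (a k * (s : ℂ) ^ k) * (ζ ^ k) ^ j‖ ^ 2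
            ≤ M * (1 + ε (N + 1)) ^ 2 := by
        calc ∑ j ∈ Finset.range M,
            ‖∑ k ∈ Finset.range (N + 1), (a k * (s : ℂ) ^ k) * (ζ ^ k) ^ j‖ ^ 2
            ≤ ∑ _j ∈ Finset.range M, (1 + ε (N + 1)) ^ 2 := by
              refine Finset.sum_le_sum fun j _ => ?_
              rw [hQ j]
              refine pow_le_pow_left₀ (norm_nonneg _) (hP _ ?_) 2
              rw [norm_mul, norm_pow, hζ1, one_pow, mul_one, Complex.norm_real]
              exact Real.norm_of_nonneg hs0.le
          _ = M * (1 + ε (N + 1)) ^ 2 := by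
              rw [Finset.sum_const, Finset.card_range, nsmul_eq_mul]
      rw [hpars] at hsum_le
      have hM0 : (0 : ℝ) < M := by
        have : 0 < M := by omega
        exact_mod_cast this
      have final : ∑ k ∈ Finset.range (N + 1), ‖a k * (s : ℂ) ^ k‖ ^ 2
          ≤ (1 + ε (N + 1)) ^ 2 := le_of_mul_le_mul_left hsum_le hM0
      refine le_trans ?_ final
      have hnm : ∀ k : ℕ, ‖a k * (s : ℂ) ^ k‖ = ‖a k‖ * s ^ k := fun k => by
        rw [norm_mul, norm_pow, Complex.norm_real, Real.norm_eq_abs, abs_of_pos hs0]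
      calc ∑ k ∈ Finset.range (n + 1), (‖a k‖ * s ^ k) ^ 2
          ≤ ∑ k ∈ Finset.range (N + 1), (‖a k‖ * s ^ k) ^ 2 := by
            refine Finset.sum_le_sum_of_subset_of_nonneg
              (Finset.range_subset_range.2 (by omega)) fun i _ _ => by positivity
        _ = ∑ k ∈ Finset.range (N + 1), ‖a k * (s : ℂ) ^ k‖ ^ 2 :=
            Finset.sum_congr rfl fun k _ => by rw [hnm k]
    have hlim : Filter.Tendsto (fun N => (1 + ε (N + 1)) ^ 2) Filter.atTop (nhds 1) := by
      have h1 : Filter.Tendsto (fun N => ε (N + 1)) Filter.atTop (nhds 0) :=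
        hεt.comp (Filter.tendsto_add_atTop_nat 1)
      have := (tendsto_const_nhds (x := (1 : ℝ)).add h1).pow 2
      simpa using this
    exact ge_of_tendsto hlim (Filter.eventually_atTop.2 ⟨n, bound⟩)
  have heq : (∑ k ∈ Finset.range (n + 1), ‖a k‖ ^ 2)
      = ∑ k ∈ Finset.range (n + 1), (‖a k‖ * (1 : ℝ) ^ k) ^ 2 := by simp
  rw [heq]
  have cont : Filter.Tendsto (fun s : ℝ => ∑ k ∈ Finset.range (n + 1), (‖a k‖ * s ^ k) ^ 2)
      (nhdsWithin 1 (Set.Iio 1))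
      (nhds (∑ k ∈ Finset.range (n + 1), (‖a k‖ * (1 : ℝ) ^ k) ^ 2)) := by
    refine Filter.Tendsto.mono_left ?_ nhdsWithin_le_nhds
    exact Continuous.tendsto (by fun_prop) 1
  refine le_of_tendsto cont ?_
  filter_upwards [mem_nhdsWithin_of_mem_nhds (isOpen_Ioi.mem_nhds one_pos),
    self_mem_nhdsWithin] with s hs0 hs1
  exact key s hs0 hs1

/-- Tail estimate, case `|a₀| < r`: `Σ_{k≥1} |a_k| r^k ≤ r √(1-|a₀|²)/√(1-r²)`. -/
theorem tail_estimate_small (f : ℂ → ℂ) (a : ℕ → ℂ)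
    (hf : AnalyticOn ℂ f (Metric.ball (0 : ℂ) 1))
    (hrep : ∀ z ∈ Metric.ball (0 : ℂ) 1, HasSum (fun k : ℕ => a k * z ^ k) (f z))
    (hbd : ∀ z ∈ Metric.ball (0 : ℂ) 1, ‖f z‖ ≤ 1)
    (r : ℝ) (hr0 : 0 < r) (hr1 : r < 1) (ha0 : ‖a 0‖ < r) :
    ∑' k : ℕ, ‖a (k + 1)‖ * r ^ (k + 1) ≤
      r * Real.sqrt (1 - ‖a 0‖ ^ 2) / Real.sqrt (1 - r ^ 2) := by
  have ha01 : ‖a 0‖ < 1 := lt_trans ha0 hr1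
  have h1a0 : 0 ≤ 1 - ‖a 0‖ ^ 2 := by nlinarith [norm_nonneg (a 0)]
  have h1r : 0 < 1 - r ^ 2 := by nlinarith
  have hb2 : ∀ n : ℕ, ∑ k ∈ Finset.range n, ‖a (k + 1)‖ ^ 2 ≤ 1 - ‖a 0‖ ^ 2 := by
    intro n
    have h := sum_norm_sq_le_one f a hrep hbd n
    rw [Finset.sum_range_succ'] at h
    linarith
  have hb1 : ∀ k : ℕ, ‖a (k + 1)‖ ≤ 1 := by
    intro k
    have h2 := hb2 (k + 1)
    have h3 : ‖a (k + 1)‖ ^ 2 ≤ ∑ j ∈ Finset.range (k + 1), ‖a (j + 1)‖ ^ 2 :=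
      Finset.single_le_sum (f := fun j => ‖a (j + 1)‖ ^ 2) (fun j _ => sq_nonneg _)
        (Finset.self_mem_range_succ k)
    nlinarith [norm_nonneg (a (k + 1)), norm_nonneg (a 0)]
  have hgeo : Summable (fun k : ℕ => r ^ (k + 1)) := by
    have := (summable_geometric_of_lt_one hr0.le hr1).mul_left r
    simpa [pow_succ, mul_comm] using this
  have hgsum : Summable (fun k : ℕ => ‖a (k + 1)‖ * r ^ (k + 1)) :=
    Summable.of_nonneg_of_le
      (fun k => mul_nonneg (norm_nonneg _) (pow_nonneg hr0.le _))
      (fun k => mul_le_of_le_one_left (pow_nonneg hr0.le _) (hb1 k)) hgeo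
  refine Summable.tsum_le_of_sum_le hgsum fun u => ?_
  obtain ⟨n, hn⟩ := u.exists_nat_subset_range
  have step1 : ∑ k ∈ u, ‖a (k + 1)‖ * r ^ (k + 1)
      ≤ ∑ k ∈ Finset.range n, ‖a (k + 1)‖ * r ^ (k + 1) :=
    Finset.sum_le_sum_of_subset_of_nonneg hn fun i _ _ =>
      mul_nonneg (norm_nonneg _) (pow_nonneg hr0.le _)
  refine le_trans step1 ?_
  set X : ℝ := ∑ k ∈ Finset.range n, ‖a (k + 1)‖ * r ^ (k + 1) with hX
  have hX0 : 0 ≤ X :=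
    Finset.sum_nonneg fun k _ => mul_nonneg (norm_nonneg _) (pow_nonneg hr0.le _)
  have hcs := Finset.sum_mul_sq_le_sq_mul_sq (Finset.range n)
    (fun k => ‖a (k + 1)‖) (fun k => r ^ (k + 1))
  have hB : ∑ k ∈ Finset.range n, (r ^ (k + 1)) ^ 2 ≤ r ^ 2 * (1 - r ^ 2)⁻¹ := by
    have heq : ∀ k : ℕ, (r ^ (k + 1)) ^ 2 = r ^ 2 * (r ^ 2) ^ k := fun k => by ring
    calc ∑ k ∈ Finset.range n, (r ^ (k + 1)) ^ 2
        = ∑ k ∈ Finset.range n, r ^ 2 * (r ^ 2) ^ k :=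
          Finset.sum_congr rfl fun k _ => heq k
      _ ≤ ∑' k : ℕ, r ^ 2 * (r ^ 2) ^ k := by
          refine Summable.sum_le_tsum _ (fun k _ => by positivity) ?_
          exact (summable_geometric_of_lt_one (sq_nonneg r) (by nlinarith)).mul_left _
      _ = r ^ 2 * (1 - r ^ 2)⁻¹ := by
          rw [tsum_mul_left, tsum_geometric_of_lt_one (sq_nonneg r) (by nlinarith)]
  have hX2 : X ^ 2 ≤ (1 - ‖a 0‖ ^ 2) * (r ^ 2 * (1 - r ^ 2)⁻¹) := by
    refine le_trans hcs ?_
    refine mul_le_mul (hb2 n) hB (Finset.sum_nonneg fun k _ => by positivity) h1a0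
  have hfin : X ≤ Real.sqrt ((1 - ‖a 0‖ ^ 2) * (r ^ 2 * (1 - r ^ 2)⁻¹)) := by
    calc X = Real.sqrt (X ^ 2) := (Real.sqrt_sq hX0).symm
      _ ≤ _ := Real.sqrt_le_sqrt hX2
  refine le_trans hfin (le_of_eq ?_)
  rw [Real.sqrt_mul h1a0, Real.sqrt_mul (sq_nonneg r), Real.sqrt_sq hr0.le,
    Real.sqrt_inv]
  ring
end

section
/- Suppose f(z) = Σ_{k=0}^∞ a_k z^k is analytic on the unit disk with |f(z)| < 1. Then for |z| = r ≤ √5 − 2, |f(z)| + Σ_{k=1}^∞ |a_k| r^k ≤ 1. -/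
open Metric Complex Finset

private lemma le_of_sq_le_sq' {u v : ℝ} (hv : 0 ≤ v) (h : u^2 ≤ v^2) (hu : 0 ≤ u) : u ≤ v := by
  nlinarith

private lemma lt_of_sq_lt_sq' {u v : ℝ} (hv : 0 ≤ v) (h : u^2 < v^2) (hu : 0 ≤ u) : u < v := by
  nlinarith

private lemma normSq_coords (a w : ℂ) :
    Complex.normSq (a - w) = ‖a‖^2 + ‖w‖^2 - 2 * ((starRingEnd ℂ) a * w).re ∧
    Complex.normSq (1 - (starRingEnd ℂ) a * w) = 1 + ‖a‖^2 * ‖w‖^2 - 2 * ((starRingEnd ℂ) a * w).re := by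
  have ea : ‖a‖^2 = a.re * a.re + a.im * a.im := by
    rw [Complex.sq_norm, Complex.normSq_apply]
  have ew : ‖w‖^2 = w.re * w.re + w.im * w.im := by
    rw [Complex.sq_norm, Complex.normSq_apply]
  rw [ea, ew]
  constructor <;>
  · simp [Complex.normSq_apply, Complex.sub_re, Complex.sub_im, Complex.mul_re, Complex.mul_im,
      Complex.conj_re, Complex.conj_im]
    ring

private lemma mobius_lt {a w : ℂ} (ha : ‖a‖ < 1) (hw : ‖w‖ < 1) :
    ‖a - w‖ < ‖1 - (starRingEnd ℂ) a * w‖ := by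
  obtain ⟨h1, h2⟩ := normSq_coords a w
  have e1 : ‖a - w‖^2 = Complex.normSq (a - w) := by
    rw [Complex.sq_norm]
  have e2 : ‖1 - (starRingEnd ℂ) a * w‖^2 = Complex.normSq (1 - (starRingEnd ℂ) a * w) := by
    rw [Complex.sq_norm]
  have ha0 := norm_nonneg a
  have hw0 := norm_nonneg w
  apply lt_of_sq_lt_sq' (norm_nonneg _) _ (norm_nonneg _)
  have key : 0 < (1 - ‖a‖^2) * (1 - ‖w‖^2) := by
    apply mul_pos <;> nlinarith
  nlinarith [e1, e2, h1, h2, key]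

private lemma mobius_bound {a w : ℂ} (ha : ‖a‖ ≤ 1) (hw : ‖w‖ ≤ 1) :
    ‖a - w‖ * (1 + ‖a‖ * ‖w‖) ≤ (‖a‖ + ‖w‖) * ‖1 - (starRingEnd ℂ) a * w‖ := by
  obtain ⟨h1, h2⟩ := normSq_coords a w
  have e1 : ‖a - w‖^2 = Complex.normSq (a - w) := by
    rw [Complex.sq_norm]
  have e2 : ‖1 - (starRingEnd ℂ) a * w‖^2 = Complex.normSq (1 - (starRingEnd ℂ) a * w) := by
    rw [Complex.sq_norm]
  have hc : |((starRingEnd ℂ) a * w).re| ≤ ‖a‖ * ‖w‖ := by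
    calc |((starRingEnd ℂ) a * w).re| ≤ ‖(starRingEnd ℂ) a * w‖ :=
          Complex.abs_re_le_norm _
    _ = ‖a‖ * ‖w‖ := by
          rw [norm_mul, RCLike.norm_conj]
  have hc' : -(‖a‖ * ‖w‖) ≤ ((starRingEnd ℂ) a * w).re := (abs_le.1 hc).1
  have ha0 := norm_nonneg a
  have hw0 := norm_nonneg w
  have h3 := norm_nonneg (a - w)
  have h4 := norm_nonneg (1 - (starRingEnd ℂ) a * w)
  apply le_of_sq_le_sq' (by positivity) _ (by positivity)
  have key : 0 ≤ (((starRingEnd ℂ) a * w).re + ‖a‖ * ‖w‖) * ((1 - ‖a‖^2) * (1 - ‖w‖^2)) := by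
    apply mul_nonneg (by linarith)
    apply mul_nonneg <;> nlinarith
  nlinarith [e1, e2, h1, h2, key, sq_nonneg (‖a‖ + ‖w‖), sq_nonneg (‖a‖*‖w‖)]

private lemma den_ne_zero {a w : ℂ} (ha : ‖a‖ < 1) (hw : ‖w‖ < 1) :
    (1 : ℂ) - (starRingEnd ℂ) a * w ≠ 0 := by
  intro h
  rw [sub_eq_zero] at h
  have h2 : ‖(starRingEnd ℂ) a * w‖ < 1 := by
    rw [norm_mul, RCLike.norm_conj]
    nlinarith [norm_nonneg a, norm_nonneg w]
  rw [← h] at h2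
  simp at h2

private lemma sp_main {g : ℂ → ℂ} (hd : DifferentiableOn ℂ g (ball (0:ℂ) 1))
    (hb : ∀ w ∈ ball (0:ℂ) 1, ‖g w‖ < 1) :
    (∀ z ∈ ball (0:ℂ) 1, ‖g z‖ * (1 + ‖g 0‖ * ‖z‖) ≤ ‖g 0‖ + ‖z‖) ∧
    ‖deriv g 0‖ ≤ 1 - ‖g 0‖^2 := by
  have h0 : (0:ℂ) ∈ ball (0:ℂ) 1 := by simp
  set a := g 0 with ha
  have haa : ‖a‖ < 1 := hb 0 h0
  set F : ℂ → ℂ := fun w => (a - g w) / (1 - (starRingEnd ℂ) a * g w) with hF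
  have hden : ∀ w ∈ ball (0:ℂ) 1, (1:ℂ) - (starRingEnd ℂ) a * g w ≠ 0 :=
    fun w hw => den_ne_zero haa (hb w hw)
  have hdF : DifferentiableOn ℂ F (ball (0:ℂ) 1) := by
    apply DifferentiableOn.div
    · exact (differentiableOn_const a).sub hd
    · exact (differentiableOn_const 1).sub ((differentiableOn_const _).mul hd)
    · exact hden
  have hF0 : F 0 = 0 := by simp [hF, ← ha]
  have hFlt : ∀ w ∈ ball (0:ℂ) 1, ‖F w‖ < 1 := by
    intro w hw
    rw [hF]
    simp only [norm_div]
    rw [div_lt_one (norm_pos_iff.2 (hden w hw))]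
    exact mobius_lt haa (hb w hw)
  have hmaps : Set.MapsTo F (ball (0:ℂ) 1) (ball (F 0) 1) := by
    intro w hw
    rw [hF0]
    exact mem_ball_zero_iff.2 (hFlt w hw)
  have hu : (1:ℂ) - (starRingEnd ℂ) a * a ≠ 0 := by
    have := hden 0 h0; rwa [← ha] at this
  have hunorm : ‖(1:ℂ) - (starRingEnd ℂ) a * a‖ = 1 - ‖a‖^2 := by
    rw [mul_comm, Complex.mul_conj]
    have : (1:ℂ) - (Complex.normSq a : ℂ) = ((1 - Complex.normSq a : ℝ) : ℂ) := by push_cast; ring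
    have h2 : Complex.normSq a = ‖a‖^2 := by rw [Complex.normSq_eq_norm_sq]
    rw [this, Complex.norm_real, h2, Real.norm_eq_abs, _root_.abs_of_nonneg (by nlinarith [norm_nonneg a])]
  constructor
  · intro z hz
    have hFz : ‖F z‖ ≤ ‖z‖ := by
      have := Complex.dist_le_div_mul_dist_of_mapsTo_ball hdF (hmaps.mono_right ball_subset_closedBall) hz
      simpa [hF0, dist_eq_norm] using this
    have hdz := hden z hz
    have e1 : (1:ℂ) - (starRingEnd ℂ) a * F z
        = (1 - (starRingEnd ℂ) a * a) / (1 - (starRingEnd ℂ) a * g z) := by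
      rw [hF]; field_simp; ring
    have hne2 : (1:ℂ) - (starRingEnd ℂ) a * F z ≠ 0 := by
      rw [e1]; exact div_ne_zero hu hdz
    have hginv : g z * (1 - (starRingEnd ℂ) a * F z) = a - F z := by
      rw [hF, e1]; dsimp only
      rw [mul_div_assoc', eq_sub_iff_add_eq, ← add_div, div_eq_iff hdz]; ring
    have hGD : ‖g z‖ * ‖1 - (starRingEnd ℂ) a * F z‖ = ‖a - F z‖ := by
      rw [← norm_mul, hginv]
    have key := mobius_bound haa.le (hFlt z hz).le
    have hD : 0 < ‖(1:ℂ) - (starRingEnd ℂ) a * F z‖ := norm_pos_iff.2 hne2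
    have key2 : ‖g z‖ * (1 + ‖a‖ * ‖F z‖) ≤ ‖a‖ + ‖F z‖ := by
      apply le_of_mul_le_mul_right _ hD
      calc ‖g z‖ * (1 + ‖a‖ * ‖F z‖) * ‖1 - (starRingEnd ℂ) a * F z‖
          = ‖g z‖ * ‖1 - (starRingEnd ℂ) a * F z‖ * (1 + ‖a‖ * ‖F z‖) := by ring
        _ = ‖a - F z‖ * (1 + ‖a‖ * ‖F z‖) := by rw [hGD]
        _ ≤ (‖a‖ + ‖F z‖) * ‖1 - (starRingEnd ℂ) a * F z‖ := key
    have hg1 : ‖g z‖ < 1 := hb z hz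
    have h5 : 0 ≤ (1 - ‖g z‖) * (‖a‖ * (‖z‖ - ‖F z‖)) :=
      mul_nonneg (by linarith) (mul_nonneg (norm_nonneg a) (by linarith))
    have h6 : 0 ≤ (‖z‖ - ‖F z‖) * (1 - ‖a‖) :=
      mul_nonneg (by linarith) (by linarith)
    nlinarith [key2, h5, h6]
  · have hat : HasDerivAt g (deriv g 0) 0 :=
      (hd.differentiableAt (isOpen_ball.mem_nhds h0)).hasDerivAt
    have hnum : HasDerivAt (fun w => a - g w) (-deriv g 0) 0 := hat.const_sub a
    have hden' : HasDerivAt (fun w => (1:ℂ) - (starRingEnd ℂ) a * g w)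
        (-((starRingEnd ℂ) a * deriv g 0)) 0 := (hat.const_mul ((starRingEnd ℂ) a)).const_sub 1
    have hdiv := hnum.div hden' (hden 0 h0)
    have hval : deriv F 0 = -deriv g 0 / (1 - (starRingEnd ℂ) a * a) := by
      rw [show F = ((fun w => a - g w) / fun w => (1:ℂ) - (starRingEnd ℂ) a * g w) from rfl,
        hdiv.deriv, ← ha]
      field_simp
      ring
    have hF1 : ‖deriv F 0‖ ≤ 1 / 1 := Complex.norm_deriv_le_div_of_mapsTo_ball hdF (hmaps.mono_right ball_subset_closedBall) one_pos
    rw [hval, norm_div, norm_neg, hunorm] at hF1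
    have hpos : (0:ℝ) < 1 - ‖a‖^2 := by nlinarith [norm_nonneg a]
    calc ‖deriv g 0‖ = ‖deriv g 0‖ / (1 - ‖a‖^2) * (1 - ‖a‖^2) := by
          rw [div_mul_cancel₀ _ hpos.ne']
      _ ≤ 1 * (1 - ‖a‖^2) := by
          apply mul_le_mul_of_nonneg_right _ hpos.le
          linarith [hF1]
      _ = 1 - ‖g 0‖^2 := by rw [one_mul, ← ha]

set_option maxHeartbeats 1000000 in
/-- `|f(z)| + Σ_{k≥1} |a_k| r^k ≤ 1` for `|z| = r ≤ √5 - 2`. -/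
theorem bohr_with_f (f : ℂ → ℂ) (a : ℕ → ℂ)
    (hf : AnalyticOn ℂ f (Metric.ball (0 : ℂ) 1))
    (hrep : ∀ z ∈ Metric.ball (0 : ℂ) 1, HasSum (fun k : ℕ => a k * z ^ k) (f z))
    (hbd : ∀ z ∈ Metric.ball (0 : ℂ) 1, ‖f z‖ < 1)
    (z : ℂ) (r : ℝ) (hz : ‖z‖ = r) (hr : r ≤ Real.sqrt 5 - 2) :
    ‖f z‖ + ∑' k : ℕ, ‖a (k + 1)‖ * r ^ (k + 1) ≤ 1 := by
  have hr0 : 0 ≤ r := hz ▸ norm_nonneg z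
  have hsq5 := Real.sq_sqrt (show (0:ℝ) ≤ 5 by norm_num)
  have hsq5' := Real.sqrt_nonneg 5
  have hsqrt5 : Real.sqrt 5 < 3 := by nlinarith
  have hr1 : r < 1 := by linarith
  have hzball : z ∈ Metric.ball (0:ℂ) 1 := by
    rw [Metric.mem_ball, dist_zero_right, hz]; linarith
  have h0ball : (0:ℂ) ∈ Metric.ball (0:ℂ) 1 := by simp
  have hf0 : f 0 = a 0 := by
    have h1 := hrep 0 h0ball
    have h2 : HasSum (fun k : ℕ => a k * (0:ℂ) ^ k) (a 0) := by
      have := hasSum_single (f := fun k : ℕ => a k * (0:ℂ) ^ k) 0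
        (fun b hb => by simp [zero_pow hb])
      simpa using this
    exact h1.unique h2
  set A := ‖a 0‖ with hA
  have hA1 : A < 1 := by rw [hA, ← hf0]; exact hbd 0 h0ball
  have hA0 : 0 ≤ A := norm_nonneg _
  -- boundedness of coefficients against any radius < 1
  have hbnd : ∀ ρ : ℝ, 0 ≤ ρ → ρ < 1 → ∃ C, ∀ n, ‖a n‖ * ρ ^ n ≤ C := by
    intro ρ hρ0 hρ1
    have hmem : ((ρ:ℝ):ℂ) ∈ Metric.ball (0:ℂ) 1 := by
      rw [Metric.mem_ball, dist_zero_right, Complex.norm_real, Real.norm_eq_abs,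
        _root_.abs_of_nonneg hρ0]
      exact hρ1
    have hsum := (hrep _ hmem).summable
    have ht : Filter.Tendsto (fun n => ‖a n‖ * ρ ^ n) Filter.atTop (nhds 0) := by
      have h2 := hsum.tendsto_atTop_zero.norm
      simp only [norm_zero] at h2
      have h3 : (fun n : ℕ => ‖a n * ((ρ:ℝ):ℂ) ^ n‖) = fun n => ‖a n‖ * ρ ^ n := by
        funext n
        rw [norm_mul, norm_pow, Complex.norm_real, Real.norm_eq_abs, _root_.abs_of_nonneg hρ0]
      rwa [h3] at h2
    obtain ⟨C, hC⟩ := ht.bddAbove_range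
    exact ⟨C, fun n => hC (Set.mem_range_self n)⟩
  -- Wiener's bound
  have hcoef : ∀ k : ℕ, 1 ≤ k → ‖a k‖ ≤ 1 - A^2 := by
    intro k hk
    have hkpos : 0 < k := hk
    have hk0 : (k:ℂ) ≠ 0 := Nat.cast_ne_zero.2 (by omega)
    set p : FormalMultilinearSeries ℂ ℂ ℂ :=
      FormalMultilinearSeries.ofScalars ℂ (fun m => a (k*m)) with hp
    have hprad : 1 ≤ p.radius := by
      apply ENNReal.le_of_forall_nnreal_lt
      intro ρ hρ
      have hρ1 : (ρ:ℝ) < 1 := by exact_mod_cast hρ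
      have hρ0 : (0:ℝ) ≤ (ρ:ℝ) := ρ.coe_nonneg
      set σ : ℝ := (ρ:ℝ) ^ ((k:ℝ)⁻¹) with hσ
      have hσ0 : 0 ≤ σ := Real.rpow_nonneg hρ0 _
      have hσ1 : σ < 1 := Real.rpow_lt_one hρ0 hρ1 (by positivity)
      obtain ⟨C, hC⟩ := hbnd σ hσ0 hσ1
      apply FormalMultilinearSeries.le_radius_of_bound _ C
      intro n
      have e : (ρ:ℝ) ^ n = σ ^ (k*n) := by
        rw [hσ, ← Real.rpow_natCast ((ρ:ℝ) ^ ((k:ℝ)⁻¹)) (k*n), ← Real.rpow_natCast (ρ:ℝ) n,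
          ← Real.rpow_mul hρ0]
        congr 1
        push_cast
        field_simp
      rw [hp, FormalMultilinearSeries.ofScalars_norm, e]
      exact hC (k*n)
    have hppos : (0:ENNReal) < p.radius := lt_of_lt_of_le (by norm_num) hprad
    have hball : HasFPowerSeriesOnBall p.sum p 0 1 :=
      (p.hasFPowerSeriesOnBall hppos).mono (by norm_num) hprad
    set h : ℂ → ℂ := p.sum with hh
    have hEball : Metric.eball (0:ℂ) 1 = Metric.ball (0:ℂ) 1 := by
      rw [← ENNReal.coe_one, Metric.eball_coe, NNReal.coe_one]
    have hdh : DifferentiableOn ℂ h (Metric.ball (0:ℂ) 1) := by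
      rw [← hEball]; exact hball.differentiableOn
    have hhsum : ∀ w ∈ Metric.ball (0:ℂ) 1, HasSum (fun m => a (k*m) * w ^ m) (h w) := by
      intro w hw
      have h2 := hball.hasSum (y := w) (by rw [hEball]; exact hw)
      simp only [hp, FormalMultilinearSeries.ofScalars_apply_eq, smul_eq_mul, zero_add] at h2
      exact h2
    have hh0 : h 0 = a 0 := by
      have h1 := hhsum 0 h0ball
      have h2 : HasSum (fun m : ℕ => a (k*m) * (0:ℂ) ^ m) (a 0) := by
        have := hasSum_single (f := fun m : ℕ => a (k*m) * (0:ℂ) ^ m) 0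
          (fun b hb => by simp [zero_pow hb])
        simpa using this
      exact h1.unique h2
    have hderiv : deriv h 0 = a k := by
      rw [hball.hasFPowerSeriesAt.deriv, hp]
      have h2 := FormalMultilinearSeries.ofScalars_apply_eq (E := ℂ)
        (c := fun m => a (k*m)) (1:ℂ) 1
      rw [h2]
      simp
    have hhb : ∀ w ∈ Metric.ball (0:ℂ) 1, ‖h w‖ < 1 := by
      intro w hw
      obtain ⟨zz, hzz⟩ := IsAlgClosed.exists_pow_nat_eq w (show 0 < k by omega)
      have hwnorm : ‖w‖ < 1 := mem_ball_zero_iff.1 hw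
      have hzznorm : ‖zz‖ < 1 := by
        by_contra hcon
        push_neg at hcon
        have h1 : (1:ℝ) ≤ ‖zz‖ ^ k := by
          have := pow_le_pow_left₀ (by norm_num : (0:ℝ) ≤ 1) hcon k
          simpa using this
        rw [← norm_pow, hzz] at h1
        linarith
      set ω : ℂ := Complex.exp (2 * Real.pi * Complex.I / k) with hω
      have hprim : IsPrimitiveRoot ω k := Complex.isPrimitiveRoot_exp k (by omega)
      have hωnorm : ‖ω‖ = 1 := by
        have h1 : ‖ω‖ ^ k = 1 := by rw [← norm_pow, hprim.pow_eq_one, norm_one]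
        have h2 : (0:ℝ) ≤ ‖ω‖ := norm_nonneg _
        by_contra hcon
        rcases lt_or_gt_of_ne hcon with hlt | hgt
        · have := pow_lt_one₀ h2 hlt (n := k) (by omega)
          linarith
        · have := one_lt_pow₀ hgt (n := k) (by omega)
          linarith
      have hmem : ∀ j : ℕ, ω ^ j * zz ∈ Metric.ball (0:ℂ) 1 := by
        intro j
        rw [mem_ball_zero_iff, norm_mul, norm_pow, hωnorm, one_pow, one_mul]
        exact hzznorm
      have havg : HasSum (fun n : ℕ => ∑ j ∈ Finset.range k, (k:ℂ)⁻¹ * (a n * (ω ^ j * zz) ^ n))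
          (∑ j ∈ Finset.range k, (k:ℂ)⁻¹ * f (ω ^ j * zz)) :=
        hasSum_sum fun j _ => (hrep _ (hmem j)).mul_left _
      have hfun : (fun n : ℕ => ∑ j ∈ Finset.range k, (k:ℂ)⁻¹ * (a n * (ω ^ j * zz) ^ n))
          = fun n : ℕ => if k ∣ n then a n * zz ^ n else 0 := by
        funext n
        have hterm : ∀ j, (ω ^ j * zz) ^ n = (ω ^ n) ^ j * zz ^ n := by
          intro j; rw [mul_pow, ← pow_mul, mul_comm j n, pow_mul]
        have hstep : ∑ j ∈ Finset.range k, (k:ℂ)⁻¹ * (a n * (ω ^ j * zz) ^ n)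
            = (k:ℂ)⁻¹ * (a n * zz ^ n) * ∑ j ∈ Finset.range k, (ω ^ n) ^ j := by
          rw [Finset.mul_sum]
          exact Finset.sum_congr rfl fun j _ => by rw [hterm]; ring
        rw [hstep]
        by_cases hdvd : k ∣ n
        · rw [if_pos hdvd, (hprim.pow_eq_one_iff_dvd n).2 hdvd]
          simp only [one_pow, Finset.sum_const, Finset.card_range, nsmul_eq_mul, mul_one]
          field_simp
        · rw [if_neg hdvd]
          have hne : ω ^ n ≠ 1 := fun hcon => hdvd ((hprim.pow_eq_one_iff_dvd n).1 hcon)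
          rw [geom_sum_eq hne]
          have he1 : (ω ^ n) ^ k = 1 := by
            rw [← pow_mul, mul_comm n k, pow_mul, hprim.pow_eq_one, one_pow]
          rw [he1]
          simp
      rw [hfun] at havg
      have hinj : Function.Injective (fun m : ℕ => k * m) :=
        fun m m' hmm => Nat.eq_of_mul_eq_mul_left hkpos hmm
      have hvan : ∀ n, n ∉ Set.range (fun m : ℕ => k * m) →
          (if k ∣ n then a n * zz ^ n else 0) = 0 := by
        intro n hn
        rw [if_neg]
        rintro ⟨m, hm⟩
        exact hn ⟨m, hm.symm⟩
      have hcomp : HasSum ((fun n : ℕ => if k ∣ n then a n * zz ^ n else 0) ∘ (fun m => k * m))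
          (∑ j ∈ Finset.range k, (k:ℂ)⁻¹ * f (ω ^ j * zz)) :=
        (hinj.hasSum_iff hvan).2 havg
      have hcomp' : HasSum (fun m : ℕ => a (k*m) * w ^ m)
          (∑ j ∈ Finset.range k, (k:ℂ)⁻¹ * f (ω ^ j * zz)) := by
        have he : ((fun n : ℕ => if k ∣ n then a n * zz ^ n else 0) ∘ (fun m => k * m))
            = fun m : ℕ => a (k*m) * w ^ m := by
          funext m
          simp only [Function.comp]
          rw [if_pos (Dvd.intro m rfl), ← hzz, ← pow_mul]
        rwa [he] at hcomp
      have heq : h w = ∑ j ∈ Finset.range k, (k:ℂ)⁻¹ * f (ω ^ j * zz) :=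
        (hhsum w hw).unique hcomp'
      rw [heq]
      calc ‖∑ j ∈ Finset.range k, (k:ℂ)⁻¹ * f (ω ^ j * zz)‖
          ≤ ∑ j ∈ Finset.range k, ‖(k:ℂ)⁻¹ * f (ω ^ j * zz)‖ := norm_sum_le _ _
        _ < ∑ _j ∈ Finset.range k, (k:ℝ)⁻¹ := by
            apply Finset.sum_lt_sum_of_nonempty ⟨0, Finset.mem_range.2 (by omega)⟩
            intro j _
            rw [norm_mul, norm_inv, Complex.norm_natCast]
            have hklt : (0:ℝ) < (k:ℝ)⁻¹ := by positivity
            calc (k:ℝ)⁻¹ * ‖f (ω ^ j * zz)‖ < (k:ℝ)⁻¹ * 1 :=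
                  mul_lt_mul_of_pos_left (hbd _ (hmem j)) hklt
              _ = (k:ℝ)⁻¹ := mul_one _
        _ = 1 := by
            rw [Finset.sum_const, Finset.card_range, nsmul_eq_mul]
            field_simp
    have := (sp_main hdh hhb).2
    rw [hderiv, hh0] at this
    exact this
  -- tail sum bound
  have hgeom : Summable (fun n : ℕ => (1 - A^2) * r ^ (n+1)) := by
    apply Summable.mul_left
    have := (summable_geometric_of_lt_one hr0 hr1).mul_left r
    have he : (fun n : ℕ => r * r ^ n) = fun n : ℕ => r ^ (n+1) := by
      funext n; rw [pow_succ]; ring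
    rwa [he] at this
  have hterm : ∀ n : ℕ, ‖a (n+1)‖ * r ^ (n+1) ≤ (1 - A^2) * r ^ (n+1) := fun n =>
    mul_le_mul_of_nonneg_right (hcoef (n+1) (by omega)) (by positivity)
  have hsummableS : Summable (fun n : ℕ => ‖a (n+1)‖ * r ^ (n+1)) :=
    Summable.of_nonneg_of_le (fun n => by positivity) hterm hgeom
  have hStail : ∑' n : ℕ, ‖a (n+1)‖ * r ^ (n+1) ≤ (1 - A^2) * (r / (1-r)) := by
    calc ∑' n : ℕ, ‖a (n+1)‖ * r ^ (n+1) ≤ ∑' n : ℕ, (1-A^2) * r ^ (n+1) :=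
          hsummableS.tsum_le_tsum hterm hgeom
      _ = (1-A^2) * (r / (1-r)) := by
          rw [tsum_mul_left]
          congr 1
          have he : (fun n : ℕ => r ^ (n+1)) = fun n : ℕ => r * r ^ n := by
            funext n; rw [pow_succ]; ring
          rw [he, tsum_mul_left, tsum_geometric_of_lt_one hr0 hr1]
          rw [div_eq_mul_inv]
  -- Schwarz-Pick for f
  have hfd : DifferentiableOn ℂ f (Metric.ball (0:ℂ) 1) := hf.differentiableOn
  have hpoint := (sp_main hfd hbd).1 z hzball
  rw [hf0, hz, ← hA] at hpoint
  -- final algebra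
  set t := ‖f z‖ with ht
  set S := ∑' n : ℕ, ‖a (n+1)‖ * r ^ (n+1) with hSdef
  have ht0 : 0 ≤ t := norm_nonneg _
  have hS0 : 0 ≤ S := tsum_nonneg (fun n => by positivity)
  have hkey : 2*r*(1+r) ≤ (1-r)^2 := by nlinarith [sq_nonneg (Real.sqrt 5 - (r+2))]
  have hP : 0 < (1 + A*r) * (1 - r) := by
    apply mul_pos _ (by linarith)
    nlinarith
  have e1 : t * ((1+A*r)*(1-r)) ≤ (A+r)*(1-r) := by
    calc t*((1+A*r)*(1-r)) = (t*(1+A*r))*(1-r) := by ring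
      _ ≤ (A+r)*(1-r) := mul_le_mul_of_nonneg_right hpoint (by linarith)
  have e2 : S * ((1-r)*(1+A*r)) ≤ (1-A^2)*(r/(1-r)) * ((1-r)*(1+A*r)) :=
    mul_le_mul_of_nonneg_right hStail (by nlinarith)
  have h1r : (1:ℝ)-r ≠ 0 := by linarith
  have e3 : (1-A^2)*(r/(1-r)) * ((1-r)*(1+A*r)) = (1-A^2)*r*(1+A*r) := by
    field_simp
  have f1 : 0 ≤ (1-A) * ((1-r)^2 - 2*r*(1+r)) :=
    mul_nonneg (by linarith) (by linarith)
  have f2 : 0 ≤ ((1-A)*(1-A)*r)*(1+r*(2+A)) := by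
    apply mul_nonneg
    · apply mul_nonneg (mul_nonneg (by linarith) (by linarith)) hr0
    · nlinarith
  have e4 : (A+r)*(1-r) + (1-A^2)*r*(1+A*r) ≤ (1+A*r)*(1-r) := by nlinarith [f1, f2]
  rw [e3] at e2
  by_contra hcon
  push_neg at hcon
  have hmul : 1 * ((1+A*r)*(1-r)) < (t + S) * ((1+A*r)*(1-r)) :=
    mul_lt_mul_of_pos_right hcon hP
  nlinarith [e1, e2, e4, hmul]
end

section
/- Suppose f(z) = Σ_{k=0}^∞ a_k z^k is analytic on the unit disk with |f(z)| < 1. Then for |z| = r ≤ 1/3, |f(z)|^2 + Σ_{k=1}^∞ |a_k| r^k ≤ 1. -/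
open Metric Complex

lemma mobius_mem (c w : ℂ) (hc : ‖c‖ < 1) (hw : ‖w‖ < 1) :
    ‖(w - c) / (1 - (starRingEnd ℂ) c * w)‖ < 1 := by
  have hcw : ‖(starRingEnd ℂ) c * w‖ < 1 := by
    rw [norm_mul, RCLike.norm_conj]
    nlinarith [norm_nonneg c, norm_nonneg w]
  have hden : (1 : ℂ) - (starRingEnd ℂ) c * w ≠ 0 := by
    intro h
    have : (starRingEnd ℂ) c * w = 1 := by linear_combination -h
    rw [this, norm_one] at hcw; linarith
  rw [norm_div, div_lt_one (norm_pos_iff.2 hden)]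
  have key : normSq (1 - (starRingEnd ℂ) c * w) - normSq (w - c)
      = (1 - normSq c) * (1 - normSq w) := by
    simp [normSq_apply, mul_re, mul_im, sub_re, sub_im, one_re, one_im, conj_re, conj_im]
    ring
  have h1 : normSq c < 1 := by rw [← Complex.sq_norm]; nlinarith [norm_nonneg c]
  have h2 : normSq w < 1 := by rw [← Complex.sq_norm]; nlinarith [norm_nonneg w]
  have h3 : normSq (w - c) < normSq (1 - (starRingEnd ℂ) c * w) := by nlinarith
  rw [← Complex.sq_norm, ← Complex.sq_norm] at h3
  nlinarith [norm_nonneg (w - c), norm_nonneg (1 - (starRingEnd ℂ) c * w)]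

lemma mobius_inv_bound (c w : ℂ) (t A : ℝ) (hA : ‖c‖ = A) (hA1 : A < 1)
    (ht : ‖w‖ ≤ t) (ht1 : t ≤ 1) :
    ‖(c + w) / (1 + (starRingEnd ℂ) c * w)‖ ≤ (A + t) / (1 + A * t) := by
  have hA0 : 0 ≤ A := hA ▸ norm_nonneg c
  have hU0 : 0 ≤ ‖w‖ := norm_nonneg w
  have hAt : A * t < 1 := by nlinarith
  have hnorm : ‖(starRingEnd ℂ) c * w‖ = A * ‖w‖ := by
    rw [norm_mul, RCLike.norm_conj, hA]
  have hden_ge : 1 - A * t ≤ ‖1 + (starRingEnd ℂ) c * w‖ := by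
    calc 1 - A * t ≤ 1 - ‖(starRingEnd ℂ) c * w‖ := by
          rw [hnorm]; nlinarith
      _ ≤ ‖1 + (starRingEnd ℂ) c * w‖ := by
          have := norm_sub_norm_le (1 : ℂ) (-((starRingEnd ℂ) c * w))
          simpa [norm_one] using this
  have hdenpos : 0 < ‖1 + (starRingEnd ℂ) c * w‖ := by linarith
  rw [norm_div, div_le_div_iff₀ hdenpos (by nlinarith)]
  set U := ‖w‖ with hU
  set s := ((starRingEnd ℂ) c * w).re with hs
  have hsle : s ≤ A * U := by
    calc s ≤ ‖(starRingEnd ℂ) c * w‖ := Complex.re_le_norm _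
      _ = A * U := hnorm
  have eA : A ^ 2 = c.re ^ 2 + c.im ^ 2 := by
    rw [← hA, Complex.sq_norm, normSq_apply]; ring
  have eU : U ^ 2 = w.re ^ 2 + w.im ^ 2 := by
    rw [hU, Complex.sq_norm, normSq_apply]; ring
  have es : s = c.re * w.re + c.im * w.im := by
    rw [hs, mul_re, conj_re, conj_im]; ring
  have h1 : ‖c + w‖ ^ 2 = A ^ 2 + U ^ 2 + 2 * s := by
    rw [Complex.sq_norm, normSq_apply, add_re, add_im, eA, eU, es]; ring
  have h2 : ‖1 + (starRingEnd ℂ) c * w‖ ^ 2 = 1 + A ^ 2 * U ^ 2 + 2 * s := by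
    rw [Complex.sq_norm, normSq_apply, add_re, add_im, mul_re, mul_im,
      conj_re, conj_im, one_re, one_im]
    have : A ^ 2 * U ^ 2 = (c.re ^ 2 + c.im ^ 2) * (w.re ^ 2 + w.im ^ 2) := by
      rw [eA, eU]
    rw [this, es]; ring
  have hUt : U ≤ t := ht
  have ht0 : 0 ≤ t := le_trans hU0 hUt
  have f5 : (0:ℝ) ≤ 1 - A ^ 2 := by nlinarith
  have f1 : (0:ℝ) ≤ (t - U) * (1 - A ^ 2) := mul_nonneg (by linarith) f5
  have f2 : (0:ℝ) ≤ (A + t) * (1 + A * U) + (1 + A * t) * (A + U) := by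
    have g1 : (0:ℝ) ≤ (A + t) * (1 + A * U) :=
      mul_nonneg (by linarith) (by nlinarith [mul_nonneg hA0 hU0])
    have g2 : (0:ℝ) ≤ (1 + A * t) * (A + U) :=
      mul_nonneg (by nlinarith [mul_nonneg hA0 ht0]) (by linarith)
    linarith
  have f3 : (0:ℝ) ≤ A * U - s := by linarith
  have f4 : (0:ℝ) ≤ 1 - t ^ 2 := by nlinarith
  have key : (‖c + w‖ * (1 + A * t)) ^ 2 ≤ ((A + t) * ‖1 + (starRingEnd ℂ) c * w‖) ^ 2 := by
    rw [mul_pow, mul_pow, h1, h2]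
    linarith [mul_nonneg f1 f2, mul_nonneg (mul_nonneg f3 f5) f4]
  exact le_of_pow_le_pow_left₀ two_ne_zero
    (mul_nonneg (by linarith : (0:ℝ) ≤ A + t) hdenpos.le) key

section SP
variable (h : ℂ → ℂ) (hd : DifferentiableOn ℂ h (ball (0:ℂ) 1))
    (hm : ∀ w ∈ ball (0:ℂ) 1, ‖h w‖ < 1)

lemma hden_aux (c : ℂ) (hc1 : ‖c‖ < 1) (w : ℂ) (hw1 : ‖w‖ < 1) :
    (1:ℂ) - (starRingEnd ℂ) c * w ≠ 0 := by
  intro hcontra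
  have h1 : ‖(starRingEnd ℂ) c * w‖ < 1 := by
    rw [norm_mul, RCLike.norm_conj]; nlinarith [norm_nonneg c, norm_nonneg w]
  have : (starRingEnd ℂ) c * w = 1 := by linear_combination -hcontra
  rw [this, norm_one] at h1; exact lt_irrefl _ h1

include hd hm in
lemma phi_props :
    DifferentiableOn ℂ (fun w => (h w - h 0) / (1 - (starRingEnd ℂ) (h 0) * h w))
        (ball (0:ℂ) 1) ∧
    Set.MapsTo (fun w => (h w - h 0) / (1 - (starRingEnd ℂ) (h 0) * h w))
        (ball (0:ℂ) 1) (ball (0:ℂ) 1) ∧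
    (fun w => (h w - h 0) / (1 - (starRingEnd ℂ) (h 0) * h w)) 0 = 0 := by
  have h0 : (0:ℂ) ∈ ball (0:ℂ) 1 := by simp
  have hc1 : ‖h 0‖ < 1 := hm 0 h0
  refine ⟨?_, ?_, ?_⟩
  · apply DifferentiableOn.div
    · exact hd.sub (differentiableOn_const _)
    · exact (differentiableOn_const _).sub ((differentiableOn_const _).mul hd)
    · exact fun w hw => hden_aux _ hc1 _ (hm w hw)
  · intro w hw
    rw [mem_ball_zero_iff]
    exact mobius_mem _ (h w) hc1 (hm w hw)
  · simp

include hd hm in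
lemma schwarz_pick (z : ℂ) (hz : z ∈ ball (0:ℂ) 1) :
    ‖h z‖ ≤ (‖h 0‖ + ‖z‖) / (1 + ‖h 0‖ * ‖z‖) := by
  obtain ⟨hdφ, hmφ, hφ0⟩ := phi_props h hd hm
  have h0 : (0:ℂ) ∈ ball (0:ℂ) 1 := by simp
  have hc1 : ‖h 0‖ < 1 := hm 0 h0
  set c := h 0 with hc
  set φ : ℂ → ℂ := fun w => (h w - c) / (1 - (starRingEnd ℂ) c * h w) with hφ
  have hz1 : ‖z‖ < 1 := mem_ball_zero_iff.1 hz
  have hb : ‖φ z‖ ≤ ‖z‖ := by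
    have := Complex.norm_le_norm_of_mapsTo_ball hdφ (hmφ.mono_right ball_subset_closedBall) hφ0 hz1
    simpa using this
  have hd1 : (1:ℂ) - (starRingEnd ℂ) c * h z ≠ 0 := hden_aux _ hc1 _ (hm z hz)
  have hd2 : (1:ℂ) + (starRingEnd ℂ) c * φ z ≠ 0 := by
    intro hcontra
    have h1 : ‖(starRingEnd ℂ) c * φ z‖ < 1 := by
      rw [norm_mul, RCLike.norm_conj]
      nlinarith [norm_nonneg c, norm_nonneg (φ z), hb]
    have : (starRingEnd ℂ) c * φ z = -1 := by linear_combination hcontra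
    rw [this] at h1; simp at h1
  have hmul : h z * (1 + (starRingEnd ℂ) c * φ z) = c + φ z := by
    rw [hφ]; dsimp only
    have hu : (1 - (starRingEnd ℂ) c * h z) * (1 - (starRingEnd ℂ) c * h z)⁻¹ = 1 :=
      mul_inv_cancel₀ hd1
    simp only [div_eq_mul_inv]
    linear_combination (-(h z - c)) * hu
  have hrec : h z = (c + φ z) / (1 + (starRingEnd ℂ) c * φ z) :=
    (eq_div_iff hd2).2 hmul
  rw [hrec]
  exact mobius_inv_bound c (φ z) ‖z‖ ‖c‖ rfl hc1 hb hz1.le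

include hd hm in
lemma schwarz_pick_deriv : ‖deriv h 0‖ ≤ 1 - ‖h 0‖ ^ 2 := by
  obtain ⟨hdφ, hmφ, hφ0⟩ := phi_props h hd hm
  have h0 : (0:ℂ) ∈ ball (0:ℂ) 1 := by simp
  have hc1 : ‖h 0‖ < 1 := hm 0 h0
  set c := h 0 with hc
  set d := deriv h 0 with hdd
  have hder : HasDerivAt h d 0 :=
    (hd.differentiableAt (isOpen_ball.mem_nhds h0)).hasDerivAt
  have hv0 : (1:ℂ) - (starRingEnd ℂ) c * c ≠ 0 := hden_aux _ hc1 _ hc1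
  have hu : HasDerivAt (fun w => h w - c) d 0 := hder.sub_const c
  have hv : HasDerivAt (fun w => (1:ℂ) - (starRingEnd ℂ) c * h w)
      (-((starRingEnd ℂ) c * d)) 0 := by
    simpa using ((hder.const_mul ((starRingEnd ℂ) c)).const_sub 1)
  have hφder : HasDerivAt (fun w => (h w - c) / (1 - (starRingEnd ℂ) c * h w))
      ((d * (1 - (starRingEnd ℂ) c * c) - (h 0 - c) * (-((starRingEnd ℂ) c * d)))
        / (1 - (starRingEnd ℂ) c * c) ^ 2) 0 := by
    simpa [hc] using hu.fun_div hv (by simpa [hc] using hv0)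
  have hsimp : ((d * (1 - (starRingEnd ℂ) c * c) - (h 0 - c) * (-((starRingEnd ℂ) c * d)))
      / (1 - (starRingEnd ℂ) c * c) ^ 2) = d / (1 - (starRingEnd ℂ) c * c) := by
    have e : h 0 - c = 0 := by rw [hc, sub_self]
    rw [e, zero_mul, sub_zero, pow_two, mul_comm d, mul_div_mul_left _ _ hv0]
  rw [hsimp] at hφder
  have hb : ‖deriv (fun w => (h w - c) / (1 - (starRingEnd ℂ) c * h w)) 0‖ ≤ 1 := by
    have := Complex.norm_deriv_le_one_of_mapsTo_ball hdφ
      (by rw [show (h 0 - c) / (1 - (starRingEnd ℂ) c * h 0) = 0 from hφ0]; exact hmφ.mono_right ball_subset_closedBall) one_pos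
    simpa using this
  rw [hφder.deriv] at hb
  have hcc : (1:ℂ) - (starRingEnd ℂ) c * c = ((1 - ‖c‖ ^ 2 : ℝ) : ℂ) := by
    rw [Complex.sq_norm]
    simp [Complex.ext_iff, normSq_apply, mul_re, mul_im, conj_re, conj_im]
    ring
  rw [hcc, norm_div, Complex.norm_real, Real.norm_eq_abs,
    abs_of_pos (by nlinarith [norm_nonneg c] : (0:ℝ) < 1 - ‖c‖ ^ 2),
    div_le_one (by nlinarith [norm_nonneg c])] at hb
  linarith
end SP

variable {f : ℂ → ℂ} {a : ℕ → ℂ}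

lemma coeff_bd (hrep : ∀ z ∈ ball (0 : ℂ) 1, HasSum (fun k : ℕ => a k * z ^ k) (f z))
    (σ : ℝ) (h0 : 0 ≤ σ) (h1 : σ < 1) : ∃ C, ∀ n, ‖a n‖ * σ ^ n ≤ C := by
  have hmem : ((σ:ℂ)) ∈ ball (0:ℂ) 1 := by
    rw [mem_ball_zero_iff, Complex.norm_real, Real.norm_eq_abs, _root_.abs_of_nonneg h0]
    exact h1
  have hsum : Summable (fun n => a n * (σ:ℂ) ^ n) := (hrep _ hmem).summable
  have htend : Filter.Tendsto (fun n => ‖a n * (σ:ℂ) ^ n‖) Filter.atTop (nhds 0) := by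
    simpa using hsum.tendsto_atTop_zero.norm
  obtain ⟨C, hC⟩ := htend.bddAbove_range
  refine ⟨C, fun n => ?_⟩
  have := hC (Set.mem_range_self n)
  rwa [norm_mul, norm_pow, Complex.norm_real, Real.norm_eq_abs,
    _root_.abs_of_nonneg h0] at this

lemma sub_summable (hrep : ∀ z ∈ ball (0 : ℂ) 1, HasSum (fun k : ℕ => a k * z ^ k) (f z))
    (k : ℕ) (hk : k ≠ 0) (x : ℝ) (h0 : 0 ≤ x) (h1 : x < 1) :
    Summable (fun m => ‖a (k * m)‖ * x ^ m) := by
  set t : ℝ := (x + 1) / 2 with htdef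
  have ht0 : 0 < t := by rw [htdef]; linarith
  have ht1 : t < 1 := by rw [htdef]; linarith
  have hxt : x < t := by rw [htdef]; linarith
  set σ : ℝ := t ^ ((k:ℝ)⁻¹) with hσ
  have hσ0 : 0 ≤ σ := Real.rpow_nonneg ht0.le _
  have hσ1 : σ < 1 := Real.rpow_lt_one ht0.le ht1 (by positivity)
  have hσk : σ ^ k = t := by
    rw [hσ, ← Real.rpow_natCast (t ^ ((k:ℝ)⁻¹)) k, ← Real.rpow_mul ht0.le,
      inv_mul_cancel₀ (by exact_mod_cast hk : (k:ℝ) ≠ 0), Real.rpow_one]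
  obtain ⟨C, hC⟩ := coeff_bd hrep σ hσ0 hσ1
  set q : ℝ := x / t with hqdef
  have hq0 : 0 ≤ q := div_nonneg h0 ht0.le
  have hq1 : q < 1 := (div_lt_one ht0).2 hxt
  have hqt : t * q = x := by rw [hqdef]; field_simp
  apply Summable.of_nonneg_of_le (fun m => by positivity) (fun m => ?_)
    ((summable_geometric_of_lt_one hq0 hq1).mul_left C)
  have hxm : x ^ m = t ^ m * q ^ m := by rw [← hqt, mul_pow]
  calc ‖a (k * m)‖ * x ^ m = (‖a (k * m)‖ * σ ^ (k * m)) * q ^ m := by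
        rw [pow_mul, hσk, hxm]; ring
    _ ≤ C * q ^ m := mul_le_mul_of_nonneg_right (hC (k * m)) (pow_nonneg hq0 m)

lemma sym_bound (hrep : ∀ z ∈ ball (0 : ℂ) 1, HasSum (fun k : ℕ => a k * z ^ k) (f z))
    (hbd : ∀ z ∈ ball (0 : ℂ) 1, ‖f z‖ < 1)
    (k : ℕ) (hk : k ≠ 0) (z : ℂ) (hz : ‖z‖ < 1) :
    ∃ S : ℂ, HasSum (fun m => a (k * m) * (z ^ k) ^ m) S ∧ ‖S‖ < 1 := by
  set ω := Complex.exp (2 * Real.pi * Complex.I / k) with hω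
  have hprim : IsPrimitiveRoot ω k := Complex.isPrimitiveRoot_exp k hk
  have hωk : ω ^ k = 1 := hprim.pow_eq_one
  have hω1 : ‖ω‖ = 1 := by
    rw [hω, Complex.norm_exp]
    convert Real.exp_zero using 2
    simp [Complex.div_re]
  have hmem : ∀ j : ℕ, ω ^ j * z ∈ ball (0:ℂ) 1 := by
    intro j
    rw [mem_ball_zero_iff, norm_mul, norm_pow, hω1, one_pow, one_mul]
    exact hz
  have hsum1 : HasSum (fun n => ∑ j ∈ Finset.range k, a n * (ω ^ j * z) ^ n)
      (∑ j ∈ Finset.range k, f (ω ^ j * z)) :=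
    hasSum_sum (fun j _ => hrep _ (hmem j))
  have hterm : (fun n => ∑ j ∈ Finset.range k, a n * (ω ^ j * z) ^ n)
      = fun n => if k ∣ n then (k:ℂ) * (a n * z ^ n) else 0 := by
    funext n
    have he : ∀ j, a n * (ω ^ j * z) ^ n = a n * z ^ n * (ω ^ n) ^ j := by
      intro j
      rw [mul_pow, ← pow_mul, mul_comm j n, pow_mul]
      ring
    simp_rw [he]
    rw [← Finset.mul_sum]
    by_cases hd : k ∣ n
    · rw [if_pos hd, (hprim.pow_eq_one_iff_dvd n).2 hd]
      simp only [one_pow, Finset.sum_const, Finset.card_range, nsmul_eq_mul, mul_one]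
      ring
    · rw [if_neg hd]
      have hne : ω ^ n ≠ 1 := fun h => hd ((hprim.pow_eq_one_iff_dvd n).1 h)
      have hgeo : ∑ j ∈ Finset.range k, (ω ^ n) ^ j = 0 := by
        rw [geom_sum_eq hne, ← pow_mul, mul_comm n k, pow_mul, hωk, one_pow, sub_self,
          zero_div]
      rw [hgeo, mul_zero]
  rw [hterm] at hsum1
  have hinj : Function.Injective (fun m : ℕ => k * m) := fun m1 m2 h =>
    Nat.eq_of_mul_eq_mul_left (Nat.pos_of_ne_zero hk) h
  have hoff : ∀ n ∉ Set.range (fun m : ℕ => k * m),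
      (if k ∣ n then (k:ℂ) * (a n * z ^ n) else 0) = 0 := by
    intro n hn
    rw [if_neg]
    rintro ⟨m, hm⟩
    exact hn ⟨m, hm.symm⟩
  have hsum2 : HasSum (fun m => (k:ℂ) * (a (k * m) * z ^ (k * m)))
      (∑ j ∈ Finset.range k, f (ω ^ j * z)) := by
    have := (hinj.hasSum_iff hoff).2 hsum1
    have he : ((fun x => if k ∣ x then (k:ℂ) * (a x * z ^ x) else 0) ∘ fun m => k * m)
        = fun m => (k:ℂ) * (a (k * m) * z ^ (k * m)) := by
      funext m
      simp [Function.comp, Nat.dvd_mul_right]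
    rwa [he] at this
  have hkne : (k:ℂ) ≠ 0 := Nat.cast_ne_zero.2 hk
  refine ⟨(k:ℂ)⁻¹ * ∑ j ∈ Finset.range k, f (ω ^ j * z), ?_, ?_⟩
  · have h3 := hsum2.mul_left (k:ℂ)⁻¹
    have he : (fun m => (k:ℂ)⁻¹ * ((k:ℂ) * (a (k * m) * z ^ (k * m))))
        = fun m => a (k * m) * (z ^ k) ^ m := by
      funext m
      rw [← mul_assoc, inv_mul_cancel₀ hkne, one_mul, ← pow_mul]
    rwa [he] at h3
  · rw [norm_mul, norm_inv, Complex.norm_natCast]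
    have hk0 : (0:ℝ) < k := by exact_mod_cast Nat.pos_of_ne_zero hk
    have hlt : ‖∑ j ∈ Finset.range k, f (ω ^ j * z)‖ < k := by
      calc ‖∑ j ∈ Finset.range k, f (ω ^ j * z)‖
          ≤ ∑ j ∈ Finset.range k, ‖f (ω ^ j * z)‖ := norm_sum_le _ _
        _ < ∑ _j ∈ Finset.range k, (1:ℝ) := by
            apply Finset.sum_lt_sum_of_nonempty
            · exact Finset.nonempty_range_iff.2 hk
            · exact fun j _ => hbd _ (hmem j)
        _ = k := by simp
    rw [inv_mul_lt_iff₀ hk0, mul_one]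
    exact hlt

lemma wiener (hrep : ∀ z ∈ ball (0 : ℂ) 1, HasSum (fun k : ℕ => a k * z ^ k) (f z))
    (hbd : ∀ z ∈ ball (0 : ℂ) 1, ‖f z‖ < 1)
    (k : ℕ) (hk : k ≠ 0) : ‖a k‖ ≤ 1 - ‖a 0‖ ^ 2 := by
  set p := FormalMultilinearSeries.ofScalars ℂ (fun m => a (k * m)) with hp
  set hfun : ℂ → ℂ := fun w => ∑' m, a (k * m) * w ^ m with hfn
  have hsummable : ∀ w : ℂ, ‖w‖ < 1 → Summable (fun m => a (k * m) * w ^ m) := by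
    intro w hw
    apply Summable.of_norm
    have := sub_summable hrep k hk ‖w‖ (norm_nonneg w) hw
    simpa [norm_mul, norm_pow] using this
  have hhs : ∀ w : ℂ, ‖w‖ < 1 → HasSum (fun m => a (k * m) * w ^ m) (hfun w) :=
    fun w hw => (hsummable w hw).hasSum
  have hcoeff : ∀ n, p.coeff n = a (k * n) := by
    intro n
    rw [hp, FormalMultilinearSeries.coeff]
    simpa using FormalMultilinearSeries.ofScalars_apply_eq (fun m => a (k * m)) (1:ℂ) n
  have hrad : 1 ≤ p.radius := by
    apply ENNReal.le_of_forall_nnreal_lt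
    intro r hr
    apply p.le_radius_of_summable_norm
    have hr1 : (r:ℝ) < 1 := by exact_mod_cast hr
    have := sub_summable hrep k hk r r.coe_nonneg hr1
    simp_rw [FormalMultilinearSeries.norm_apply_eq_norm_coef, hcoeff]
    exact this
  have hfps : HasFPowerSeriesOnBall hfun p 0 1 := by
    refine ⟨hrad, zero_lt_one, ?_⟩
    intro y hy
    have hy1 : ‖y‖ < 1 := by
      rw [mem_emetric_ball_zero_iff, ← ofReal_norm, ENNReal.ofReal_lt_one] at hy
      exact hy
    have := hhs y hy1
    simp_rw [FormalMultilinearSeries.apply_eq_pow_smul_coeff, hcoeff, smul_eq_mul, zero_add]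
    simpa [mul_comm] using this
  have hball : Metric.eball (0:ℂ) 1 = ball (0:ℂ) 1 := by
    have h1 : ((1:NNReal):ENNReal) = 1 := by norm_num
    rw [← h1, Metric.emetric_ball_nnreal]
    norm_num
  have hdiff : DifferentiableOn ℂ hfun (ball (0:ℂ) 1) := by
    rw [← hball]
    exact hfps.differentiableOn
  have hmem : ∀ w ∈ ball (0:ℂ) 1, ‖hfun w‖ < 1 := by
    intro y hy
    rw [mem_ball_zero_iff] at hy
    obtain ⟨z, hzk⟩ := IsAlgClosed.exists_pow_nat_eq y (Nat.pos_of_ne_zero hk)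
    have hz1 : ‖z‖ < 1 := by
      by_contra hcon
      push_neg at hcon
      have h2 : (1:ℝ) ≤ ‖z‖ ^ k := one_le_pow₀ hcon
      rw [← norm_pow, hzk] at h2
      linarith
    obtain ⟨S, hS, hSlt⟩ := sym_bound hrep hbd k hk z hz1
    rw [hzk] at hS
    rwa [(hhs y hy).unique hS]
  have h0 : hfun 0 = a 0 := by
    have : hfun 0 = ∑' m, a (k * m) * (0:ℂ) ^ m := rfl
    rw [this, tsum_eq_single 0 (fun m hm => by simp [zero_pow hm])]
    simp
  have hderiv : deriv hfun 0 = a k := by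
    rw [hfps.hasFPowerSeriesAt.deriv]
    have : p 1 (fun _ => 1) = p.coeff 1 := rfl
    rw [this, hcoeff]
    norm_num
  have := schwarz_pick_deriv hfun hdiff hmem
  rwa [hderiv, h0] at this

/-- `|f(z)|² + Σ_{k≥1} |a_k| r^k ≤ 1` for `|z| = r ≤ 1/3`. -/
theorem bohr_with_f_sq (f : ℂ → ℂ) (a : ℕ → ℂ)
    (hf : AnalyticOn ℂ f (Metric.ball (0 : ℂ) 1))
    (hrep : ∀ z ∈ Metric.ball (0 : ℂ) 1, HasSum (fun k : ℕ => a k * z ^ k) (f z))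
    (hbd : ∀ z ∈ Metric.ball (0 : ℂ) 1, ‖f z‖ < 1)
    (z : ℂ) (r : ℝ) (hz : ‖z‖ = r) (hr : r ≤ 1 / 3) :
    ‖f z‖ ^ 2 + ∑' k : ℕ, ‖a (k + 1)‖ * r ^ (k + 1) ≤ 1 := by
  have hr0 : 0 ≤ r := hz ▸ norm_nonneg z
  have hr1 : r < 1 := by linarith
  have hzb : z ∈ ball (0:ℂ) 1 := by rw [mem_ball_zero_iff, hz]; linarith
  have hf0 : f 0 = a 0 := by
    have h1 := hrep 0 (by simp)
    have h2 : HasSum (fun n : ℕ => a n * (0:ℂ) ^ n) (a 0) := by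
      have := hasSum_single (f := fun n : ℕ => a n * (0:ℂ) ^ n) 0
        (fun n hn => by simp [zero_pow hn])
      simpa using this
    exact h1.unique h2
  set A := ‖a 0‖ with hA
  have hA1 : A < 1 := by rw [hA, ← hf0]; exact hbd 0 (by simp)
  have hA0 : 0 ≤ A := norm_nonneg _
  have hsp : ‖f z‖ ≤ (A + r) / (1 + A * r) := by
    have := schwarz_pick f hf.differentiableOn hbd z hzb
    rwa [hf0, ← hA, hz] at this
  have hW : ∀ m : ℕ, ‖a (m + 1)‖ ≤ 1 - A ^ 2 :=
    fun m => wiener hrep hbd (m + 1) (Nat.succ_ne_zero m)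
  have hgeom : Summable (fun m : ℕ => r ^ (m + 1)) := by
    apply Summable.comp_injective (summable_geometric_of_lt_one hr0 hr1)
      (add_left_injective 1)
  have hsummable : Summable (fun m : ℕ => ‖a (m + 1)‖ * r ^ (m + 1)) := by
    apply Summable.of_nonneg_of_le (fun m => by positivity) (fun m => ?_)
      (hgeom.mul_left (1 - A ^ 2))
    exact mul_le_mul_of_nonneg_right (hW m) (by positivity)
  have hgeomsum : (∑' m : ℕ, r ^ (m + 1)) = r / (1 - r) := by
    have h1 : (fun m : ℕ => r ^ (m + 1)) = fun m : ℕ => r ^ m * r := by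
      funext m; rw [pow_succ]
    rw [h1, tsum_mul_right, tsum_geometric_of_lt_one hr0 hr1, div_eq_mul_inv, mul_comm]
  have htsum : (∑' m : ℕ, ‖a (m + 1)‖ * r ^ (m + 1)) ≤ (1 - A ^ 2) * (r / (1 - r)) := by
    calc (∑' m : ℕ, ‖a (m + 1)‖ * r ^ (m + 1))
        ≤ ∑' m : ℕ, (1 - A ^ 2) * r ^ (m + 1) := by
          apply hsummable.tsum_le_tsum (fun m => ?_) (hgeom.mul_left _)
          exact mul_le_mul_of_nonneg_right (hW m) (by positivity)
      _ = (1 - A ^ 2) * (r / (1 - r)) := by rw [tsum_mul_left, hgeomsum]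
  have hfz2 : ‖f z‖ ^ 2 ≤ ((A + r) / (1 + A * r)) ^ 2 :=
    pow_le_pow_left₀ (norm_nonneg _) hsp 2
  have hd2 : (0:ℝ) < 1 - r := by linarith
  have hd1 : (0:ℝ) < (1 + A * r) ^ 2 := by nlinarith [mul_nonneg hA0 hr0]
  have key : ((A + r) / (1 + A * r)) ^ 2 + (1 - A ^ 2) * (r / (1 - r)) ≤ 1 := by
    have h4 : (0:ℝ) ≤ (1 + r) ^ 2 - (1 + A * r) ^ 2 := by
      nlinarith [mul_nonneg (mul_nonneg hr0 (by linarith : (0:ℝ) ≤ 1 - A))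
        (by nlinarith [mul_nonneg hA0 hr0] : (0:ℝ) ≤ 2 + r + A * r)]
    have hcore : (A + r) ^ 2 * (1 - r) + (1 - A ^ 2) * r * (1 + A * r) ^ 2
        ≤ (1 + A * r) ^ 2 * (1 - r) := by
      have hA2 : (0:ℝ) ≤ 1 - A ^ 2 := by nlinarith
      have h3r : (0:ℝ) ≤ 1 - 3 * r := by linarith
      nlinarith [mul_nonneg (mul_nonneg hA2 (by linarith : (0:ℝ) ≤ 1 + r)) h3r,
        mul_nonneg (mul_nonneg hA2 hr0) h4]
    calc ((A + r) / (1 + A * r)) ^ 2 + (1 - A ^ 2) * (r / (1 - r))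
        = ((A + r) ^ 2 * (1 - r) + (1 - A ^ 2) * r * (1 + A * r) ^ 2)
            / ((1 + A * r) ^ 2 * (1 - r)) := by
          rw [div_pow]; field_simp
      _ ≤ 1 := by rw [div_le_one (by positivity)]; exact hcore
  linarith
end

section
/- The constant p = 2(√5 − 1) in the area-refined Bohr-type inequality |f(z)| + Σ_{k≥1} |a_k| r^k + p(S_r/π) ≤ 1 at r = √5 − 2 is sharp: for every ε > 0 there exists a ∈ (0,1) such that for f(z) = (z + a)/(1 + a z) and z = r = √5 − 2, |f(r)| + Σ_{k=1}^∞ |a_k| r^k + (p + ε)(S_r/π) > 1. -/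
set_option maxHeartbeats 1000000

/-- Sharpness of `p = 2(√5 - 1)` in Theorem 3, witnessed by `f(z) = (z+a)/(1+az)`
at `r = √5 - 2`. -/
theorem bohr_f_area_p_sharp (ε : ℝ) (hε : 0 < ε) :
    ∃ a : ℝ, 0 < a ∧ a < 1 ∧
      (let r := Real.sqrt 5 - 2
       (a + r) / (1 + a * r) + (∑' k : ℕ, (1 - a ^ 2) * a ^ k * r ^ (k + 1)) +
         (2 * (Real.sqrt 5 - 1) + ε) *
           (r ^ 2 * (1 - a ^ 2) ^ 2 / (1 - a ^ 2 * r ^ 2) ^ 2) > 1) := by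
  have h5 : Real.sqrt 5 * Real.sqrt 5 = 5 := Real.mul_self_sqrt (by norm_num)
  have hs0 : (0:ℝ) ≤ Real.sqrt 5 := Real.sqrt_nonneg 5
  have h5l : (2.236:ℝ) < Real.sqrt 5 := by nlinarith
  have h5u : Real.sqrt 5 < 2.2361 := by nlinarith
  obtain ⟨s, hs⟩ : ∃ s : ℝ, s = Real.sqrt 5 := ⟨_, rfl⟩
  rw [← hs] at h5 hs0 h5l h5u ⊢
  obtain ⟨d, hd0, hd1, hd2⟩ : ∃ d : ℝ, 0 < d ∧ d ≤ 1/2 ∧ d ≤ ε/20 :=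
    ⟨min (1/2) (ε/20), lt_min (by norm_num) (by positivity),
      min_le_left _ _, min_le_right _ _⟩
  obtain ⟨a, ha⟩ : ∃ a : ℝ, a = 1 - d := ⟨_, rfl⟩
  refine ⟨a, by rw [ha]; linarith, by rw [ha]; linarith, ?_⟩
  have ha0 : 1/2 ≤ a := by rw [ha]; linarith
  have ha1 : a < 1 := by rw [ha]; linarith
  show (a + (s - 2)) / (1 + a * (s - 2)) +
      (∑' k : ℕ, (1 - a ^ 2) * a ^ k * (s - 2) ^ (k + 1)) +
      (2 * (s - 1) + ε) *
        ((s - 2) ^ 2 * (1 - a ^ 2) ^ 2 / (1 - a ^ 2 * (s - 2) ^ 2) ^ 2) > 1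
  have hr0 : (0:ℝ) < s - 2 := by linarith
  have hru : s - 2 < 1/4 := by linarith
  have har0 : (0:ℝ) ≤ a * (s - 2) := mul_nonneg (by linarith) (by linarith)
  have har : a * (s - 2) < 1 := by nlinarith
  have hsum : (∑' k : ℕ, (1 - a ^ 2) * a ^ k * (s - 2) ^ (k + 1)) =
      (1 - a ^ 2) * (s - 2) / (1 - a * (s - 2)) := by
    have h1 : ∀ k : ℕ, (1 - a ^ 2) * a ^ k * (s - 2) ^ (k + 1) =
        ((1 - a ^ 2) * (s - 2)) * (a * (s - 2)) ^ k := by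
      intro k
      rw [mul_pow, pow_succ]
      ring
    rw [tsum_congr h1, tsum_mul_left, tsum_geometric_of_lt_one har0 har,
      div_eq_mul_inv]
  have hden2 : (0:ℝ) < 1 - a * (s - 2) := by linarith
  have hden1 : (0:ℝ) < 1 + a * (s - 2) := by linarith
  have hden3 : (0:ℝ) < 1 - a ^ 2 * (s - 2) ^ 2 := by nlinarith [mul_pos hden2 hden1]
  -- the positive factor
  have hW : (-63 + 28*s) + (-188 + 84*s)*a + (-161 + 72*s)*a^2 ≥ -1 := by nlinarith
  have h1 : (0:ℝ) ≤ (1 - a) * (((-63 + 28*s) + (-188 + 84*s)*a + (-161 + 72*s)*a^2) + 1) :=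
    mul_nonneg (by linarith) (by linarith)
  have h2 : ε * ((9 - 4*s) * (1 + a)^2 - 9/80) ≥ 0 := by
    refine mul_nonneg hε.le ?_
    nlinarith [sq_nonneg (1 + a)]
  have hK : 0 < (1 - a) * ((-63 + 28*s) + (-188 + 84*s)*a + (-161 + 72*s)*a^2)
      + ε * (9 - 4*s) * (1 + a)^2 := by
    have e : (1 - a) * ((-63 + 28*s) + (-188 + 84*s)*a + (-161 + 72*s)*a^2)
        + ε * (9 - 4*s) * (1 + a)^2
        = (1 - a) * (((-63 + 28*s) + (-188 + 84*s)*a + (-161 + 72*s)*a^2) + 1)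
          + ε * ((9 - 4*s) * (1 + a)^2 - 9/80) - (1 - a) + 9/80 * ε := by ring
    rw [e]
    have hda : 1 - a = d := by rw [ha]; ring
    linarith [h1, h2, hd2, hε, hda]
  have hnum : (a + (s-2)) * (1 - a*(s-2)) * (1 - a^2*(s-2)^2)
      + (1 - a^2) * (s-2) * (1 + a*(s-2)) * (1 - a^2*(s-2)^2)
      + (2*(s-1) + ε) * (s-2)^2 * (1 - a^2)^2
      - (1 - a^2*(s-2)^2)^2
      = (1 - a)^2 * ((1 - a) * ((-63 + 28*s) + (-188 + 84*s)*a + (-161 + 72*s)*a^2)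
          + ε * (9 - 4*s) * (1 + a)^2) := by
    linear_combination ((ε - 10 + 2*s) + (34 - 2*ε - 6*s)*a^2 - 2*a^3
      + (-51 + ε + 12*s - s^2)*a^4 + (29 - 8*s + s^2)*a^5) * h5
  have hfinal : (a + (s - 2)) / (1 + a * (s - 2)) +
      (1 - a ^ 2) * (s - 2) / (1 - a * (s - 2)) +
      (2 * (s - 1) + ε) *
        ((s - 2) ^ 2 * (1 - a ^ 2) ^ 2 / (1 - a ^ 2 * (s - 2) ^ 2) ^ 2) - 1
      = ((1 - a)^2 * ((1 - a) * ((-63 + 28*s) + (-188 + 84*s)*a + (-161 + 72*s)*a^2)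
          + ε * (9 - 4*s) * (1 + a)^2)) / ((1 - a ^ 2 * (s - 2) ^ 2) ^ 2) := by
    rw [← hnum]
    field_simp
    ring
  rw [gt_iff_lt, ← sub_pos, hsum, hfinal]
  exact div_pos (mul_pos (pow_pos (by linarith) 2) hK) (pow_pos hden3 2)
end

section
/- For 0 ≤ a ≤ 1, the inequality (1−a)³ · (7(−9 + 4√5) + 4(−47 + 21√5)a + (−161 + 72√5)a²) ≤ 0 holds; equivalently, with r = √5 − 2, (a + r)/(1 + a r) + r(1 − a²)/(1 − r a) + 2(√5 − 1) · r²(1 − a²)²/(1 − a² r²)² ≤ 1. -/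
set_option maxHeartbeats 1000000 in
/-- The key elementary inequality at `r = √5 - 2`. -/
theorem key_inequality (a : ℝ) (ha0 : 0 ≤ a) (ha1 : a ≤ 1) :
    (1 - a) ^ 3 * (7 * (-9 + 4 * Real.sqrt 5) + 4 * (-47 + 21 * Real.sqrt 5) * a +
      (-161 + 72 * Real.sqrt 5) * a ^ 2) ≤ 0 ∧
    (let r := Real.sqrt 5 - 2
     (a + r) / (1 + a * r) + r * (1 - a ^ 2) / (1 - r * a) +
       2 * (Real.sqrt 5 - 1) * (r ^ 2 * (1 - a ^ 2) ^ 2 / (1 - a ^ 2 * r ^ 2) ^ 2) ≤ 1) := by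
  set s := Real.sqrt 5 with hsdef
  have hs : s ^ 2 = 5 := Real.sq_sqrt (by norm_num)
  have hs0 : 0 ≤ s := Real.sqrt_nonneg 5
  have hs1 : (2.236 : ℝ) < s := by nlinarith
  have hs2 : s < 2.2361 := by nlinarith
  have hp : (0:ℝ) ≤ (1 - a) ^ 3 := pow_nonneg (by linarith) 3
  constructor
  · have hbr : 7 * (-9 + 4 * s) + 4 * (-47 + 21 * s) * a + (-161 + 72 * s) * a ^ 2 ≤ 0 := by
      have hc0 : -9 + 4 * s ≤ 0 := by nlinarith
      have hc1 : -47 + 21 * s ≤ 0 := by nlinarith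
      have hc2 : -161 + 72 * s ≤ 0 := by nlinarith
      nlinarith [mul_nonneg ha0 ha0, sq_nonneg a, mul_nonpos_of_nonpos_of_nonneg hc1 ha0,
        mul_nonpos_of_nonpos_of_nonneg hc2 (sq_nonneg a)]
    exact mul_nonpos_of_nonneg_of_nonpos hp hbr
  · intro r
    have hr : r = s - 2 := rfl
    rw [hr]
    have hr0 : (0:ℝ) < s - 2 := by linarith
    have hr1 : s - 2 < 1/4 := by linarith
    have h1 : (0:ℝ) < 1 + a * (s - 2) := by nlinarith
    have h2 : (0:ℝ) < 1 - (s - 2) * a := by nlinarith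
    have h3 : (0:ℝ) < 1 - a ^ 2 * (s - 2) ^ 2 := by nlinarith
    have hD : (0:ℝ) < (1 + a * (s - 2)) * (1 - (s - 2) * a) * (1 - a ^ 2 * (s - 2) ^ 2) ^ 2 := by
      positivity
    have hQ : (0:ℝ) ≤ (63 - 28*s) + (188 - 84*s) * a + (-966 + 432*s) * a^2
        + (-3372 + 1508*s) * a^3 + (-2889 + 1292*s) * a^4 := by
      have e2 : a ^ 3 ≤ a ^ 2 := pow_le_pow_of_le_one ha0 ha1 (by norm_num)
      have e3 : a ^ 4 ≤ a ^ 2 := pow_le_pow_of_le_one ha0 ha1 (by norm_num)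
      have e4 : a ^ 2 ≤ 1 := by nlinarith
      have hc2 : -966 + 432*s ≤ 0 := by nlinarith
      have hc3 : -3372 + 1508*s ≤ 0 := by nlinarith
      have hc4 : -2889 + 1292*s ≤ 0 := by nlinarith
      have hc1 : 0 ≤ 188 - 84*s := by nlinarith
      have hsum : 0 ≤ -7164 + 3204 * s := by nlinarith
      have t1 : 0 ≤ (188 - 84*s) * a := mul_nonneg hc1 ha0
      have t3 : (-3372 + 1508*s) * a ^ 2 ≤ (-3372 + 1508*s) * a ^ 3 :=
        mul_le_mul_of_nonpos_left e2 hc3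
      have t4 : (-2889 + 1292*s) * a ^ 2 ≤ (-2889 + 1292*s) * a ^ 4 :=
        mul_le_mul_of_nonpos_left e3 hc4
      have tsum : ((-966 + 432*s) + (-3372 + 1508*s) + (-2889 + 1292*s)) * 1
          ≤ ((-966 + 432*s) + (-3372 + 1508*s) + (-2889 + 1292*s)) * a ^ 2 :=
        mul_le_mul_of_nonpos_left e4 (by linarith)
      linarith only [t1, t3, t4, tsum, hsum]
    have key : (a + (s - 2)) * (1 - (s - 2) * a) * (1 - a ^ 2 * (s - 2) ^ 2) ^ 2
        + (s - 2) * (1 - a ^ 2) * (1 + a * (s - 2)) * (1 - a ^ 2 * (s - 2) ^ 2) ^ 2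
        + 2 * (s - 1) * ((s - 2) ^ 2 * (1 - a ^ 2) ^ 2 * ((1 + a * (s - 2)) * (1 - (s - 2) * a)))
        ≤ (1 + a * (s - 2)) * (1 - (s - 2) * a) * (1 - a ^ 2 * (s - 2) ^ 2) ^ 2 := by
      have factored : (1 + a * (s - 2)) * (1 - (s - 2) * a) * (1 - a ^ 2 * (s - 2) ^ 2) ^ 2
          - ((a + (s - 2)) * (1 - (s - 2) * a) * (1 - a ^ 2 * (s - 2) ^ 2) ^ 2
          + (s - 2) * (1 - a ^ 2) * (1 + a * (s - 2)) * (1 - a ^ 2 * (s - 2) ^ 2) ^ 2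
          + 2 * (s - 1) * ((s - 2) ^ 2 * (1 - a ^ 2) ^ 2 * ((1 + a * (s - 2)) * (1 - (s - 2) * a))))
          = (1 - a) ^ 3 * ((63 - 28*s) + (188 - 84*s) * a + (-966 + 432*s) * a^2
            + (-3372 + 1508*s) * a^3 + (-2889 + 1292*s) * a^4) := by
        linear_combination (10 - 2*s + (-249 + 82*s - 18*s^2 + 2*s^3) * a^2 + 3 * a^3
          + (785 - 268*s + 59*s^2 - 6*s^3) * a^4 + (-87 + 24*s - 3*s^2) * a^5
          + (-1027 + 384*s - 103*s^2 + 16*s^3 - s^4) * a^6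
          + (565 - 220*s + 65*s^2 - 12*s^3 + s^4) * a^7) * hs
      nlinarith [mul_nonneg hp hQ]
    have heq : (a + (s - 2)) / (1 + a * (s - 2)) + (s - 2) * (1 - a ^ 2) / (1 - (s - 2) * a)
        + 2 * (s - 1) * ((s - 2) ^ 2 * (1 - a ^ 2) ^ 2 / (1 - a ^ 2 * (s - 2) ^ 2) ^ 2)
        = ((a + (s - 2)) * (1 - (s - 2) * a) * (1 - a ^ 2 * (s - 2) ^ 2) ^ 2
          + (s - 2) * (1 - a ^ 2) * (1 + a * (s - 2)) * (1 - a ^ 2 * (s - 2) ^ 2) ^ 2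
          + 2 * (s - 1) * ((s - 2) ^ 2 * (1 - a ^ 2) ^ 2 * ((1 + a * (s - 2)) * (1 - (s - 2) * a))))
          / ((1 + a * (s - 2)) * (1 - (s - 2) * a) * (1 - a ^ 2 * (s - 2) ^ 2) ^ 2) := by
      rw [mul_div_assoc', div_add_div _ _ h1.ne' h2.ne',
        div_add_div _ _ (mul_ne_zero h1.ne' h2.ne') (pow_ne_zero 2 h3.ne'),
        div_eq_div_iff (mul_ne_zero (mul_ne_zero h1.ne' h2.ne') (pow_ne_zero 2 h3.ne')) hD.ne']
      ring
    rw [heq]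
    exact (div_le_one hD).mpr key
end
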